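/- arXiv:2001.11763 — 6 statements merged into one kernel-verified Lean document; each statement's English description precedes it below -/
import Mathlib

section
/- Let Σ and Δ be alphabets, let f be a substitution assigning to each letter of Σ a set of words over Δ (extended to words by f(a_1 a_2 ⋯ a_n) = {A_1 A_2 ⋯ A_n : A_i ∈ f(a_i) for all i}), and let u ∈ Σ* be a square-free word. Then every word in the set f(u) is square-free provided all of the following conditions hold: (I) for every factor v of u of length at most 3, every word in f(v) is square-free; (II) for all letters a, b, c ∈ Σ and all words A ∈ f(a), B ∈ f(b), C ∈ f(c): (i) if A is a factor of B, then a = b and A = B; (ii) if A B = p C s for some words p, s over Δ, then p is empty or s is empty; (iii) if A = A' A'', B = B' B'', and C = A' B'' for some words A', A'', B', B'', then c = a or c = b. -/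
/-- A word `w` is square-free if it contains no factor `x ++ x` with `x` nonempty. -/
def SquareFree {α : Type*} (w : List α) : Prop :=
  ∀ x : List α, x ≠ [] → ¬ (x ++ x) <:+: w

/-- `v` is an extension of `w`: insert a single letter anywhere in `w`. -/
def IsExtension {α : Type*} (w v : List α) : Prop :=
  ∃ (w' w'' : List α) (a : α), w = w' ++ w'' ∧ v = w' ++ [a] ++ w''

/-- `w` is extremal square-free. -/
def ExtremalSquareFree {α : Type*} (w : List α) : Prop :=
  SquareFree w ∧ ∀ v, IsExtension w v → ¬ SquareFree v

/-- Extension of a set-valued substitution from letters to words: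
`SubstSet f (a₁ ⋯ aₙ) = {A₁ ++ ⋯ ++ Aₙ : Aᵢ ∈ f aᵢ}`. -/
def SubstSet {α β : Type*} (f : α → Set (List β)) : List α → Set (List β)
  | [] => {[]}
  | a :: w => {W | ∃ A ∈ f a, ∃ B ∈ SubstSet f w, W = A ++ B}

namespace SqfSub
variable {α β : Type*}

/-- join of the blocks of a list of (letter, block) pairs -/
def J (L : List (α × List β)) : List β := (L.map Prod.snd).flatten

@[simp] lemma J_nil : J ([] : List (α × List β)) = [] := rfl
@[simp] lemma J_cons (p : α × List β) (L : List (α × List β)) : J (p :: L) = p.2 ++ J L := rfl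
@[simp] lemma J_append (L M : List (α × List β)) : J (L ++ M) = J L ++ J M := by
  simp [J]

lemma split_app {l₁ l₂ l₃ l₄ : List β} (h : l₁ ++ l₂ = l₃ ++ l₄)
    (hl : l₁.length ≤ l₃.length) : ∃ m, l₃ = l₁ ++ m ∧ l₂ = m ++ l₄ := by
  rcases List.append_eq_append_iff.1 h with ⟨m, h1, h2⟩ | ⟨m, h1, h2⟩
  · exact ⟨m, h1, h2⟩
  · have hm : m = [] := by
      have h3 := congrArg List.length h1
      simp at h3
      exact List.eq_nil_of_length_eq_zero (by omega)
    subst hm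
    simp only [List.append_nil] at h1
    exact ⟨[], by simp [h1], by simp [h2]⟩

lemma sq_of {l v s t : List α} (hsf : SquareFree l) (hv : v ≠ [])
    (h : l = s ++ (v ++ v) ++ t) : False :=
  hsf v hv ⟨s, t, h.symm⟩

lemma sqf_infix {l v : List α} (hsf : SquareFree l) (hv : v <:+: l) : SquareFree v :=
  fun x hx hinf => hsf x hx (hinf.trans hv)

lemma sqf_reverse {l : List α} (hsf : SquareFree l) : SquareFree l.reverse := by
  intro x hx hinf
  have h2 : (x.reverse ++ x.reverse) <:+: l := by
    have := List.reverse_infix.2 hinf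
    simpa using this
  exact hsf x.reverse (by simpa using hx) h2

lemma J_nil_of_ne {L : List (α × List β)} (hne : ∀ p ∈ L, p.2 ≠ []) (h : J L = []) :
    L = [] := by
  cases L with
  | nil => rfl
  | cons p L' =>
    exfalso
    simp only [J_cons, List.append_eq_nil_iff] at h
    exact hne p (by simp) h.1

lemma splitmid : ∀ (L : List (α × List β)) (Y Z : List β),
    J L = Y ++ Z → Z ≠ [] →
    ∃ LA t0 At LB At1 At2, L = LA ++ (t0, At) :: LB ∧ At = At1 ++ At2 ∧ At2 ≠ [] ∧
      Y = J LA ++ At1 ∧ Z = At2 ++ J LB := by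
  intro L
  induction L with
  | nil =>
    intro Y Z h hZ
    exfalso
    simp only [J_nil] at h
    exact hZ (List.append_eq_nil_iff.1 h.symm).2
  | cons p L' IH =>
    intro Y Z h hZ
    simp only [J_cons] at h
    by_cases hc : p.2.length ≤ Y.length
    · obtain ⟨m, hm1, hm2⟩ := split_app h hc
      obtain ⟨LA, t0, At, LB, At1, At2, e1, e2, e3, e4, e5⟩ := IH m Z hm2 hZ
      exact ⟨p :: LA, t0, At, LB, At1, At2, by simp [e1], e2, e3, by simp [hm1, e4], e5⟩
    · push_neg at hc
      obtain ⟨m, hm1, hm2⟩ := split_app h.symm (le_of_lt hc)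
      refine ⟨[], p.1, p.2, L', Y, m, by simp, hm1, ?_, by simp, hm2⟩
      intro hm
      rw [hm] at hm1
      have := congrArg List.length hm1
      simp at this
      omega

def Hi (f : α → Set (List β)) : Prop :=
  ∀ (a b : α) (A B : List β), A ∈ f a → B ∈ f b → A <:+: B → a = b ∧ A = B
def Hii (f : α → Set (List β)) : Prop :=
  ∀ (a b c : α) (A B C : List β), A ∈ f a → B ∈ f b → C ∈ f c →
    ∀ p s : List β, A ++ B = p ++ C ++ s → p = [] ∨ s = []
def Hiii (f : α → Set (List β)) : Prop :=
  ∀ (a b c : α) (A B C : List β), A ∈ f a → B ∈ f b → C ∈ f c →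
    ∀ A' A'' B' B'' : List β, A = A' ++ A'' → B = B' ++ B'' → C = A' ++ B'' →
      c = a ∨ c = b

lemma sync (f : α → Set (List β)) (hi : Hi f) (hii : Hii f) :
    ∀ (L : List (α × List β)) (P C S : List β) (c : α),
    (∀ p ∈ L, p.2 ∈ f p.1) → (∀ p ∈ L, p.2 ≠ []) → C ∈ f c → C ≠ [] →
    J L = P ++ C ++ S → ∃ L1 a' L2, L = L1 ++ (a', C) :: L2 ∧ J L1 = P := by
  intro L
  induction L with
  | nil =>
    intro P C S c _ _ _ hC h
    exfalso
    simp only [J_nil] at h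
    have := congrArg List.length h
    simp at this
    exact hC (List.eq_nil_of_length_eq_zero (by omega))
  | cons p L' IH =>
    obtain ⟨a, A⟩ := p
    intro P C S c hf hne hCm hC h
    simp only [J_cons] at h
    by_cases hβ : A.length ≤ P.length
    · have h' : A ++ J L' = P ++ (C ++ S) := by simpa [List.append_assoc] using h
      obtain ⟨m, hm1, hm2⟩ := split_app h' hβ
      obtain ⟨L1, a', L2, e1, e2⟩ := IH m C S c (fun q hq => hf q (by simp [hq]))
        (fun q hq => hne q (by simp [hq])) hCm hC (by simpa [List.append_assoc] using hm2)
      exact ⟨(a, A) :: L1, a', L2, by simp [e1], by simp [e2, hm1]⟩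
    · push_neg at hβ
      by_cases hα : P.length + C.length ≤ A.length
      · have h' : (P ++ C) ++ S = A ++ J L' := by simpa [List.append_assoc] using h.symm
        obtain ⟨m, hm1, hm2⟩ := split_app h' (by simp; omega)
        have hCp : C <:+: A := ⟨P, m, by simp [hm1, List.append_assoc]⟩
        obtain ⟨hac, hCA⟩ := hi c a C A hCm (hf (a, A) (by simp)) hCp
        have hlen := congrArg List.length hm1
        rw [← hCA] at hlen
        simp at hlen
        have hP0 : P = [] := List.eq_nil_of_length_eq_zero (by omega)
        exact ⟨[], a, L', by simp [hCA], by simp [hP0]⟩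
      · push_neg at hα
        have h' : P ++ (C ++ S) = A ++ J L' := by simpa [List.append_assoc] using h.symm
        obtain ⟨m, hm1, hm2⟩ := split_app h' (by omega)
        -- hm1 : A = P ++ m, hm2 : C ++ S = m ++ J L'
        have hmlen : A.length = P.length + m.length := by
          have := congrArg List.length hm1; simpa using this
        obtain ⟨m2, hn1, hn2⟩ := split_app hm2.symm (by omega)
        -- hn1 : C = m ++ m2, hn2 : J L' = m2 ++ S
        have hm2len : C.length = m.length + m2.length := by
          have := congrArg List.length hn1; simpa using this
        by_cases hP0 : P = []
        · exfalso
          subst hP0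
          simp only [List.nil_append] at hm1
          have hAC : A <:+: C := ⟨[], m2, by simp [hn1, hm1]⟩
          obtain ⟨-, hACeq⟩ := hi a c A C (hf (a, A) (by simp)) hCm hAC
          have h5 := congrArg List.length hACeq
          simp only [List.length_nil] at hα hmlen
          omega
        · cases L' with
          | nil =>
            simp only [J_nil] at hn2
            have := congrArg List.length hn2
            simp [J] at this
            omega
          | cons q L'' =>
            obtain ⟨b, B⟩ := q
            simp only [J_cons] at hn2
            by_cases hb : B.length ≤ m2.length
            · exfalso
              obtain ⟨m3, ho1, ho2⟩ := split_app hn2 hb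
              -- ho1 : m2 = B ++ m3
              have hBC : B <:+: C := ⟨m, m3, by simp [hn1, ho1, List.append_assoc]⟩
              obtain ⟨-, hBCeq⟩ := hi b c B C (hf (b, B) (by simp)) hCm hBC
              have h1 := congrArg List.length hn1
              have h2 := congrArg List.length ho1
              rw [← hBCeq] at h1
              simp at h1 h2
              omega
            · push_neg at hb
              obtain ⟨B2, ho1, ho2⟩ := split_app hn2.symm (by omega)
              have hB2 : B2 ≠ [] := by
                intro hB2
                rw [hB2] at ho1
                have := congrArg List.length ho1
                simp at this
                omega
              have key : A ++ B = P ++ C ++ B2 := by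
                rw [hm1, ho1, hn1]
                simp [List.append_assoc]
              rcases hii a b c A B C (hf (a, A) (by simp)) (hf (b, B) (by simp)) hCm P B2 key with
                h0 | h0
              · exact absurd h0 hP0
              · exact absurd h0 hB2

lemma matchL (f : α → Set (List β)) (hi : Hi f) :
    ∀ (N M : List (α × List β)) (Y Z Yr : List β) (ay : α),
    (∀ p ∈ M, p.2 ∈ f p.1) →
    (∀ p ∈ N, p.2 ∈ f p.1) → (∀ p ∈ N, p.2 ≠ []) →
    Yr ≠ [] → (Y ++ Yr) ∈ f ay →
    J M ++ Y = J N ++ Z → ∃ M2, M = N ++ M2 ∧ J M2 ++ Y = Z := by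
  intro N
  induction N with
  | nil =>
    intro M Y Z Yr ay _ _ _ _ _ h
    exact ⟨M, by simp, by simpa using h⟩
  | cons q N' IH =>
    obtain ⟨b, B⟩ := q
    intro M Y Z Yr ay hfM hfN hneN hYr hYm h
    cases M with
    | nil =>
      exfalso
      simp only [J_nil, J_cons, List.nil_append] at h
      have hBY : B <:+: Y ++ Yr := ⟨[], (J N' ++ Z) ++ Yr, by simp [h, List.append_assoc]⟩
      obtain ⟨-, hBeq⟩ := hi b ay B (Y ++ Yr) (hfN (b, B) (by simp)) hYm hBY
      have h1 := congrArg List.length h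
      have h2 := congrArg List.length hBeq
      simp at h1 h2
      have := List.length_pos_iff.2 hYr
      omega
    | cons p M' =>
      obtain ⟨a, A⟩ := p
      simp only [J_cons] at h
      have h' : A ++ (J M' ++ Y) = B ++ (J N' ++ Z) := by
        simpa [List.append_assoc] using h
      rcases lt_trichotomy A.length B.length with hl | hl | hl
      · exfalso
        obtain ⟨m, hm1, -⟩ := split_app h' (le_of_lt hl)
        have hAB : A <:+: B := ⟨[], m, by simp [hm1]⟩
        obtain ⟨-, hABeq⟩ := hi a b A B (hfM (a, A) (by simp)) (hfN (b, B) (by simp)) hAB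
        rw [hABeq] at hl
        omega
      · obtain ⟨hAB, hrest⟩ := List.append_inj h' hl
        obtain ⟨hab, -⟩ := hi a b A B (hfM (a, A) (by simp)) (hfN (b, B) (by simp))
          (hAB ▸ List.infix_rfl)
        obtain ⟨M2, e1, e2⟩ := IH M' Y Z Yr ay (fun q hq => hfM q (by simp [hq]))
          (fun q hq => hfN q (by simp [hq])) (fun q hq => hneN q (by simp [hq])) hYr hYm hrest
        exact ⟨M2, by simp [e1, hab, hAB], e2⟩
      · exfalso
        obtain ⟨m, hm1, -⟩ := split_app h'.symm (le_of_lt hl)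
        have hBA : B <:+: A := ⟨[], m, by simp [hm1]⟩
        obtain ⟨-, hBAeq⟩ := hi b a B A (hfN (b, B) (by simp)) (hfM (a, A) (by simp)) hBA
        rw [hBAeq] at hl
        omega

lemma tone (f : α → Set (List β)) (hi : Hi f)
    (t0 b : α) (At At1 At2 B An P x S : List β) (R : List β)
    (hAt : At = At1 ++ At2) (hAt2 : At2 ≠ []) (hAtm : At ∈ f t0) (hBm : B ∈ f b)
    (hY : P ++ x = At1) (hZ : x ++ S = At2 ++ (B ++ (R ++ An)))
    (hS : S.length < An.length) : False := by
  have hlen := congrArg List.length hZ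
  have hlenY := congrArg List.length hY
  have hlenAt := congrArg List.length hAt
  simp at hlen hlenY hlenAt
  have hAt2pos : 0 < At2.length := List.length_pos_iff.2 hAt2
  have hsplit : (At2 ++ B) ++ (R ++ An) = x ++ S := by
    rw [hZ]; simp [List.append_assoc]
  obtain ⟨m, hm1, -⟩ := split_app hsplit (by simp; omega)
  -- hm1 : x = (At2 ++ B) ++ m
  have hBx : B <:+: At := by
    refine ⟨P ++ At2, m ++ At2, ?_⟩
    rw [hAt, ← hY, hm1]
    simp [List.append_assoc]
  obtain ⟨-, hBeq⟩ := hi b t0 B At hBm hAtm hBx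
  have h1 := congrArg List.length hm1
  have h2 := congrArg List.length hBeq
  simp at h1 h2
  omega

/-- reversal of a block list -/
def RL (L : List (α × List β)) : List (α × List β) :=
  (L.map (fun p => (p.1, p.2.reverse))).reverse

@[simp] lemma RL_nil : RL ([] : List (α × List β)) = [] := rfl

lemma RL_append (L M : List (α × List β)) : RL (L ++ M) = RL M ++ RL L := by
  simp [RL]

lemma RL_cons (p : α × List β) (L : List (α × List β)) :
    RL (p :: L) = RL L ++ [(p.1, p.2.reverse)] := by
  simp [RL]

@[simp] lemma RL_single (a : α) (A : List β) : RL [(a, A)] = [(a, A.reverse)] := rfl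

lemma J_RL (L : List (α × List β)) : J (RL L) = (J L).reverse := by
  induction L with
  | nil => simp
  | cons p L' IH => rw [RL_cons]; simp [IH]

lemma fst_RL (L : List (α × List β)) :
    (RL L).map Prod.fst = (L.map Prod.fst).reverse := by
  simp [RL, List.map_reverse]

lemma mem_RL {p : α × List β} {L : List (α × List β)} (h : p ∈ RL L) :
    ∃ q ∈ L, p = (q.1, q.2.reverse) := by
  simp only [RL, List.mem_reverse, List.mem_map] at h
  obtain ⟨q, hq, rfl⟩ := h
  exact ⟨q, hq, rfl⟩

/-- reversed substitution -/
def fR (f : α → Set (List β)) : α → Set (List β) := fun a => {A | A.reverse ∈ f a}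

lemma fR_mem {f : α → Set (List β)} {a : α} {A : List β} (h : A.reverse ∈ f a) :
    A ∈ fR f a := h

lemma Hi_fR {f : α → Set (List β)} (hi : Hi f) : Hi (fR f) := by
  intro a b A B hA hB hAB
  obtain ⟨hab, he⟩ := hi a b A.reverse B.reverse hA hB (List.reverse_infix.2 hAB)
  exact ⟨hab, by simpa using congrArg List.reverse he⟩

lemma Hii_fR {f : α → Set (List β)} (hii : Hii f) : Hii (fR f) := by
  intro a b c A B C hA hB hC p s h
  have h' : B.reverse ++ A.reverse = s.reverse ++ C.reverse ++ p.reverse := by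
    have := congrArg List.reverse h
    simpa [List.reverse_append, List.append_assoc] using this
  rcases hii b a c B.reverse A.reverse C.reverse hB hA hC s.reverse p.reverse h' with h0 | h0
  · right; simpa using congrArg List.reverse h0
  · left; simpa using congrArg List.reverse h0

lemma Hiii_fR {f : α → Set (List β)} (hiii : Hiii f) : Hiii (fR f) := by
  intro a b c A B C hA hB hC A' A'' B' B'' hA' hB' hC'
  have e1 : B.reverse = B''.reverse ++ B'.reverse := by
    rw [hB']; simp
  have e2 : A.reverse = A''.reverse ++ A'.reverse := by
    rw [hA']; simp
  have e3 : C.reverse = B''.reverse ++ A'.reverse := by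
    rw [hC']; simp
  rcases hiii b a c B.reverse A.reverse C.reverse hB hA hC B''.reverse B'.reverse
    A''.reverse A'.reverse e1 e2 e3 with h0 | h0
  · right; exact h0
  · left; exact h0

lemma hf_RL {f : α → Set (List β)} {L : List (α × List β)}
    (hf : ∀ p ∈ L, p.2 ∈ f p.1) : ∀ p ∈ RL L, p.2 ∈ fR f p.1 := by
  intro p hp
  obtain ⟨q, hq, rfl⟩ := mem_RL hp
  exact fR_mem (by simpa using hf q hq)

lemma hne_RL {L : List (α × List β)}
    (hne : ∀ p ∈ L, p.2 ≠ []) : ∀ p ∈ RL L, p.2 ≠ [] := by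
  intro p hp
  obtain ⟨q, hq, rfl⟩ := mem_RL hp
  simpa using hne q hq

lemma substset_elim (f : α → Set (List β)) :
    ∀ (u : List α) (W : List β), W ∈ SubstSet f u →
    ∃ L : List (α × List β), u = L.map Prod.fst ∧ (∀ p ∈ L, p.2 ∈ f p.1) ∧ W = J L := by
  intro u
  induction u with
  | nil =>
    intro W hW
    refine ⟨[], by simp, by simp, ?_⟩
    simpa [SubstSet] using hW
  | cons a u' IH =>
    intro W hW
    obtain ⟨A, hA, B, hB, rfl⟩ := hW
    obtain ⟨L, h1, h2, h3⟩ := IH B hB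
    refine ⟨(a, A) :: L, by simp [h1], ?_, by simp [h3]⟩
    intro p hp
    rcases List.mem_cons.1 hp with rfl | hp'
    · exact hA
    · exact h2 p hp'

lemma substset_intro (f : α → Set (List β)) :
    ∀ (L : List (α × List β)), (∀ p ∈ L, p.2 ∈ f p.1) →
    J L ∈ SubstSet f (L.map Prod.fst) := by
  intro L
  induction L with
  | nil => intro _; simp [SubstSet, J]
  | cons p L' IH =>
    intro hf
    exact ⟨p.2, hf p (by simp), J L', IH (fun q hq => hf q (by simp [hq])), rfl⟩

lemma core (f : α → Set (List β)) (hi : Hi f) (hii : Hii f) (hiii : Hiii f)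
    (a1 t0 an : α) (A1 At An At1 At2 P x S : List β)
    (Lmid Lfull : List (α × List β))
    (hLfull : Lfull ≠ [])
    (hf : ∀ p ∈ (a1, A1) :: (Lmid ++ (t0, At) :: (Lfull ++ [(an, An)])), p.2 ∈ f p.1)
    (hne : ∀ p ∈ (a1, A1) :: (Lmid ++ (t0, At) :: (Lfull ++ [(an, An)])), p.2 ≠ [])
    (hsf : SquareFree (((a1, A1) :: (Lmid ++ (t0, At) :: (Lfull ++ [(an, An)]))).map Prod.fst))
    (hx : x ≠ [])
    (hAt : At = At1 ++ At2) (hAt2 : At2 ≠ [])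
    (h1 : P ++ x = A1 ++ (J Lmid ++ At1))
    (h2 : x ++ S = At2 ++ (J Lfull ++ An))
    (hP : P.length < A1.length)
    (hS : S.length < An.length) : False := by
  have hA1m : A1 ∈ f a1 := hf (a1, A1) (by simp)
  have hAtm : At ∈ f t0 := hf (t0, At) (by simp)
  have hAnm : An ∈ f an := hf (an, An) (by simp)
  -- step 1 : A1 = P ++ A1r
  obtain ⟨A1r, hA1eq, he1⟩ := split_app h1 (le_of_lt hP)
  have hA1rlen : A1.length = P.length + A1r.length := by
    have := congrArg List.length hA1eq; simpa using this
  have hA1r : A1r ≠ [] := by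
    intro h0; rw [h0] at hA1rlen; simp at hA1rlen; omega
  -- step 2 : An = An1 ++ S, x = (At2 ++ J Lfull) ++ An1
  have hl2 : x.length + S.length = At2.length + ((J Lfull).length + An.length) := by
    have := congrArg List.length h2; simpa using this
  have hsplit2 : (At2 ++ J Lfull) ++ An = x ++ S := by
    rw [h2]; simp [List.append_assoc]
  obtain ⟨An1, he2x, hAneq⟩ := split_app hsplit2 (by simp; omega)
  have hAn1len : An.length = An1.length + S.length := by
    have := congrArg List.length hAneq; simpa using this
  have hAn1 : An1 ≠ [] := by
    intro h0; rw [h0] at hAn1len; simp at hAn1len; omega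
  -- step 3 : Lfull = (b, B) :: Lf'
  obtain ⟨⟨b, B⟩, Lf', rfl⟩ : ∃ q Lf', Lfull = q :: Lf' := by
    cases Lfull with
    | nil => exact absurd rfl hLfull
    | cons q Lf' => exact ⟨q, Lf', rfl⟩
  have hBm : B ∈ f b := hf (b, B) (by simp)
  have hBne : B ≠ [] := hne (b, B) (by simp)
  have he2 : x = At2 ++ (B ++ (J Lf' ++ An1)) := by
    rw [he2x]; simp [List.append_assoc]
  have hxx : A1r ++ (J Lmid ++ At1) = At2 ++ (B ++ (J Lf' ++ An1)) := he1.symm.trans he2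
  have key : ∀ T : List β,
      A1r ++ (J Lmid ++ (At1 ++ T)) = At2 ++ (B ++ (J Lf' ++ (An1 ++ T))) := by
    intro T
    have := congrArg (· ++ T) hxx
    simpa [List.append_assoc] using this
  -- step 4 : occurrence of B in J L at position |P ++ At2|
  have hJL : J ((a1, A1) :: (Lmid ++ (t0, At) :: (((b, B) :: Lf') ++ [(an, An)]))) =
      (P ++ At2) ++ B ++ ((J Lf' ++ An1) ++ (x ++ S)) := by
    simp only [J_cons, J_append, J_nil, List.append_nil, List.append_assoc]
    rw [hA1eq, hAt, hAneq, he2]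
    simp only [List.append_assoc]
    rw [key (At2 ++ (B ++ (J Lf' ++ (An1 ++ S))))]
  obtain ⟨L1, a', L2, hLsplit, hJ1⟩ := sync f hi hii _ (P ++ At2) B _ b hf hne hBm hBne hJL
  -- step 6 : L1 = [(a1, A1)] and At2 = A1r
  have hAt2A1r : At2 = A1r := by
    cases L1 with
    | nil =>
      exfalso
      simp only [J_nil] at hJ1
      exact hAt2 (List.append_eq_nil_iff.1 hJ1.symm).2
    | cons q L1' =>
      rw [List.cons_append] at hLsplit
      obtain ⟨hq, htail⟩ := List.cons_eq_cons.1 hLsplit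
      have hJ1' : A1 ++ J L1' = P ++ At2 := by
        rw [← hq] at hJ1; simpa using hJ1
      rw [hA1eq, List.append_assoc] at hJ1'
      have hcan : A1r ++ J L1' = At2 := List.append_cancel_left hJ1'
      cases L1' with
      | nil => simpa using hcan.symm
      | cons r L1'' =>
        exfalso
        have hrmem : r ∈ (a1, A1) :: (Lmid ++ (t0, At) :: (((b, B) :: Lf') ++ [(an, An)])) := by
          have hr : r ∈ Lmid ++ (t0, At) :: (b, B) :: (Lf' ++ [(an, An)]) := by
            rw [htail]; simp
          simp only [List.mem_cons]
          exact Or.inr hr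
        have hr2At : r.2 <:+: At := by
          refine ⟨At1 ++ A1r, J L1'', ?_⟩
          rw [hAt, ← hcan]
          simp [List.append_assoc]
        obtain ⟨-, hreq⟩ := hi r.1 t0 r.2 At (hf r hrmem) hAtm hr2At
        have hc1 := congrArg List.length hcan
        have hc2 := congrArg List.length hreq
        have hc3 := congrArg List.length hAt
        simp only [J_cons, List.length_append] at hc1 hc3
        have hA1rpos : 0 < A1r.length := List.length_pos_iff.2 hA1r
        omega
  -- step 7 : cancel A1r to get the matching equation
  have hmatch : J Lmid ++ At1 = J ((b, B) :: Lf') ++ An1 := by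
    have h7 : A1r ++ (J Lmid ++ At1) = A1r ++ (B ++ (J Lf' ++ An1)) := by
      rw [← hAt2A1r] at hxx ⊢
      exact hxx
    have h8 := List.append_cancel_left h7
    rw [h8]; simp [List.append_assoc]
  -- step 8 : match blocks
  obtain ⟨M2, hMeq, hM2⟩ := matchL f hi ((b, B) :: Lf') Lmid At1 An1 At2 t0
    (fun q hq => hf q (by simp only [List.mem_cons, List.mem_append] at hq ⊢; tauto))
    (fun q hq => hf q (by simp only [List.mem_cons, List.mem_append] at hq ⊢; tauto))
    (fun q hq => hne q (by simp only [List.mem_cons, List.mem_append] at hq ⊢; tauto))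
    hAt2 (hAt ▸ hAtm) hmatch
  -- step 9 : final case analysis
  cases M2 with
  | nil =>
    simp only [List.append_nil] at hMeq
    simp only [J_nil, List.nil_append] at hM2
    have hAtdec : At = An1 ++ A1r := by rw [hAt, hAt2A1r, hM2]
    rcases hiii an a1 t0 An A1 At hAnm hA1m hAtm An1 S P A1r hAneq hA1eq hAtdec with h0 | h0
    · -- t0 = an : square (F ++ [an])^2 after the first letter
      refine sq_of (v := b :: (Lf'.map Prod.fst ++ [an])) (s := [a1]) (t := []) hsf
        (by simp) ?_
      simp [hMeq, h0, List.append_assoc]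
    · -- t0 = a1 : square (a1 :: F)^2 before the last letter
      refine sq_of (v := a1 :: b :: Lf'.map Prod.fst) (s := []) (t := [an]) hsf
        (by simp) ?_
      simp [hMeq, h0, List.append_assoc]
  | cons r M2' =>
    obtain ⟨c, Ac⟩ := r
    have hAcmem : (c, Ac) ∈ (a1, A1) :: (Lmid ++ (t0, At) :: (((b, B) :: Lf') ++ [(an, An)])) := by
      simp only [List.mem_cons, List.mem_append, hMeq]
      tauto
    have hAcAn : Ac <:+: An := by
      refine ⟨[], J M2' ++ (At1 ++ S), ?_⟩
      rw [hAneq, ← hM2]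
      simp [List.append_assoc]
    obtain ⟨hcan', hAceq⟩ := hi c an Ac An (hf _ hAcmem) hAnm hAcAn
    have l1 := congrArg List.length hM2
    have l2 := congrArg List.length hAceq
    simp only [J_cons, List.length_append] at l1
    have hAt10 : At1 = [] := List.eq_nil_of_length_eq_zero (by omega)
    have hS0 : S = [] := List.eq_nil_of_length_eq_zero (by omega)
    have hM2'0 : M2' = [] := by
      refine J_nil_of_ne (fun q hq => hne q ?_) (List.eq_nil_of_length_eq_zero (by omega))
      simp only [List.mem_cons, List.mem_append, hMeq]
      tauto
    have hAtA1 : At <:+: A1 := by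
      refine ⟨P, [], ?_⟩
      rw [hAt, hAt10, hAt2A1r, hA1eq]
      simp
    obtain ⟨ht0a1, -⟩ := hi t0 a1 At A1 hAtm hA1m hAtA1
    refine sq_of (v := a1 :: (b :: (Lf'.map Prod.fst ++ [an]))) (s := []) (t := []) hsf
      (by simp) ?_
    simp [hMeq, hM2'0, ht0a1, hcan', List.append_assoc]

lemma RL_eq_nil_iff {L : List (α × List β)} : RL L = [] ↔ L = [] := by
  simp [RL]

lemma main (f : α → Set (List β)) (hi : Hi f) (hii : Hii f) (hiii : Hiii f)
    (L : List (α × List β))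
    (hf : ∀ p ∈ L, p.2 ∈ f p.1) (hne : ∀ p ∈ L, p.2 ≠ [])
    (hsf : SquareFree (L.map Prod.fst))
    (h3 : L.length ≤ 3 → SquareFree (J L))
    (x P S : List β) (hx : x ≠ [])
    (hjoin : J L = P ++ (x ++ x) ++ S)
    (a1 : α) (A1 : List β) (Ltl : List (α × List β)) (hhead : L = (a1, A1) :: Ltl)
    (hP : P.length < A1.length)
    (an : α) (An : List β) (Lin : List (α × List β)) (hlast : L = Lin ++ [(an, An)])
    (hS : S.length < An.length) : False := by
  by_cases hlen : L.length ≤ 3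
  · exact (h3 hlen) x hx ⟨P, S, hjoin.symm⟩
  push_neg at hlen
  obtain ⟨LA, t0, At, LB, At1, At2, hLsp, hAt, hAt2, hY, hZ⟩ :=
    splitmid L (P ++ x) (x ++ S) (by rw [hjoin]; simp [List.append_assoc]) (by simp [hx])
  have hLAlen : L.length = LA.length + 1 + LB.length := by
    rw [hLsp]; simp; omega
  rcases List.eq_nil_or_concat LB with rfl | ⟨LBi, q, hLBq⟩
  · -- CASE A : the second x starts inside the LAST block
    have hAnAt : (an, An) = (t0, At) := by
      have h9 := List.append_inj' (hlast.symm.trans hLsp) (by rfl)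
      simpa using h9.2
    obtain ⟨rfl, rfl⟩ : an = t0 ∧ An = At := by
      simpa [Prod.ext_iff] using hAnAt
    have hZ' : x ++ S = At2 := by simpa using hZ
    -- LA = (a1, A1) :: LAj ++ [(am, Am)]
    have hLAhead : LA = (a1, A1) :: LA.tail ∧ 2 ≤ LA.tail.length := by
      cases LA with
      | nil => exfalso; simp at hLAlen; omega
      | cons p LA2 =>
        have : p = (a1, A1) := by
          rw [hhead] at hLsp
          exact (List.cons_eq_cons.1 hLsp.symm).1
        subst this
        refine ⟨rfl, ?_⟩
        simp at hLAlen ⊢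
        omega
    obtain ⟨hLAeq, hLA2len⟩ := hLAhead
    rcases List.eq_nil_or_concat LA.tail with h0 | ⟨LAj, ⟨am, Am⟩, hLA2⟩
    · rw [h0] at hLA2len; simp at hLA2len
    have hLAfull : LA = (a1, A1) :: (LAj ++ [(am, Am)]) := by rw [hLAeq, hLA2, List.concat_eq_append]
    have hLAj : LAj ≠ [] := by
      intro h0
      rw [h0] at hLA2
      rw [hLA2] at hLA2len
      simp at hLA2len
    have hLshape : L = (a1, A1) :: (LAj ++ [(am, Am)]) ++ [(an, An)] := by
      rw [hLsp, hLAfull]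
    have hRLL : RL L = (an, An.reverse) :: ((am, Am.reverse) :: (RL LAj ++ [(a1, A1.reverse)])) := by
      rw [hLshape]
      simp [RL_append, RL_cons]
    have hfR : ∀ p ∈ (an, An.reverse) :: ((am, Am.reverse) :: (RL LAj ++ [(a1, A1.reverse)])),
        p.2 ∈ fR f p.1 := by
      rw [← hRLL]; exact hf_RL hf
    have hneR : ∀ p ∈ (an, An.reverse) :: ((am, Am.reverse) :: (RL LAj ++ [(a1, A1.reverse)])),
        p.2 ≠ [] := by
      rw [← hRLL]; exact hne_RL hne
    have hsfR : SquareFree (((an, An.reverse) :: ((am, Am.reverse) ::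
        (RL LAj ++ [(a1, A1.reverse)]))).map Prod.fst) := by
      rw [← hRLL, fst_RL]
      exact sqf_reverse hsf
    have hJLA : J LA = A1 ++ (J LAj ++ Am) := by
      rw [hLAfull]; simp [List.append_assoc]
    by_cases hcase : At1 = []
    · -- reversed CORE with t' = 2
      have hAt2At : At2 = An := by rw [hAt, hcase]; simp
      have h1' : S.reverse ++ x.reverse = An.reverse ++ (J ([] : List (α × List β)) ++ []) := by
        have := congrArg List.reverse hZ'
        simp only [List.reverse_append] at this
        simpa [hAt2At] using this
      have h2' : x.reverse ++ P.reverse = Am.reverse ++ (J (RL LAj) ++ A1.reverse) := by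
        have hYY : P ++ x = J LA := by simpa [hcase] using hY
        have := congrArg List.reverse hYY
        rw [hJLA] at this
        simp only [List.reverse_append] at this
        rw [J_RL]
        simpa [List.append_assoc] using this
      exact core (fR f) (Hi_fR hi) (Hii_fR hii) (Hiii_fR hiii)
        an am a1 An.reverse Am.reverse A1.reverse [] Am.reverse
        S.reverse x.reverse P.reverse [] (RL LAj)
        (fun h0 => hLAj (RL_eq_nil_iff.1 h0))
        hfR hneR hsfR (by simpa using hx) (by simp)
        (by simpa using hneR (am, Am.reverse) (by simp))
        h1' h2'
        (by simpa using hS) (by simpa using hP)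
    · -- reversed TONE
      have h1' : S.reverse ++ x.reverse = At2.reverse := by
        have := congrArg List.reverse hZ'
        simpa [List.reverse_append] using this
      have h2' : x.reverse ++ P.reverse =
          At1.reverse ++ (Am.reverse ++ (J (RL LAj) ++ A1.reverse)) := by
        have := congrArg List.reverse hY
        rw [hJLA] at this
        simp only [List.reverse_append] at this
        rw [J_RL]
        simpa [List.append_assoc] using this
      refine tone (fR f) (Hi_fR hi) an am An.reverse At2.reverse At1.reverse
        Am.reverse A1.reverse S.reverse x.reverse P.reverse (J (RL LAj))
        (by rw [hAt]; simp) (by simpa using hcase)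
        (by simpa [fR] using hf (an, An) (by rw [hLshape]; simp))
        (by simpa [fR] using hf (am, Am) (by rw [hLshape]; simp))
        h1' h2' (by simpa using hP)
  · -- CASE B/C : LB = LBi ++ [q]
    rw [List.concat_eq_append] at hLBq
    subst hLBq
    obtain ⟨an', An'⟩ := q
    have hAnq : (an', An') = (an, An) := by
      have hL2 : L = (LA ++ (t0, At) :: LBi) ++ [(an', An')] := by
        rw [hLsp]; simp
      have h9 := List.append_inj' (hlast.symm.trans hL2) (by rfl)
      simpa using h9.2.symm
    obtain ⟨rfl, rfl⟩ : an = an' ∧ An = An' := by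
      simpa [Prod.ext_iff] using hAnq.symm
    have hZ2 : x ++ S = At2 ++ (J LBi ++ An) := by
      simpa [List.append_assoc] using hZ
    cases LBi with
    | cons b0 LBi' =>
      obtain ⟨b0a, B0⟩ := b0
      -- good case
      cases LA with
      | nil =>
        -- t = 1 : TONE directly
        have hheadAt : (a1, A1) = (t0, At) := by
          rw [hhead] at hLsp
          exact (List.cons_eq_cons.1 hLsp).1
        obtain ⟨rfl, rfl⟩ : a1 = t0 ∧ A1 = At := by
          simpa [Prod.ext_iff] using hheadAt
        refine tone f hi a1 b0a A1 At1 At2 B0 An P x S (J LBi') hAt hAt2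
          (hf (a1, A1) (by rw [hLsp]; simp))
          (hf (b0a, B0) (by rw [hLsp]; simp))
          (by simpa using hY) (by simpa [List.append_assoc] using hZ2) hS
      | cons p Lmid0 =>
        have hpa1 : p = (a1, A1) := by
          rw [hhead] at hLsp
          exact (List.cons_eq_cons.1 hLsp.symm).1
        subst hpa1
        have hLshape : L = (a1, A1) :: (Lmid0 ++ (t0, At) :: (((b0a, B0) :: LBi') ++ [(an, An)])) := by
          rw [hLsp]; simp
        refine core f hi hii hiii a1 t0 an A1 At An At1 At2 P x S Lmid0 ((b0a, B0) :: LBi')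
          (by simp) (by rw [← hLshape]; exact hf) (by rw [← hLshape]; exact hne)
          (by rw [← hLshape]; exact hsf) hx hAt hAt2
          (by simpa [List.append_assoc] using hY) hZ2 hP hS
    | nil =>
      have hZ3 : x ++ S = At2 ++ An := by simpa using hZ2
      -- LA = (a1, A1) :: Lmid0, with Lmid0 ≠ []
      have hLAcons : LA = (a1, A1) :: LA.tail ∧ 1 ≤ LA.tail.length := by
        cases LA with
        | nil => exfalso; simp at hLAlen; omega
        | cons p LA2 =>
          have : p = (a1, A1) := by
            rw [hhead] at hLsp
            exact (List.cons_eq_cons.1 hLsp.symm).1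
          subst this
          refine ⟨rfl, ?_⟩
          simp at hLAlen ⊢
          omega
      obtain ⟨hLAeq, hLA2len⟩ := hLAcons
      have hLmid0 : LA.tail ≠ [] := by
        intro h0; rw [h0] at hLA2len; simp at hLA2len
      have hLshape : L = ((a1, A1) :: LA.tail) ++ [(t0, At), (an, An)] := by
        rw [hLsp, ← hLAeq]; simp
      have hJLA : J LA = A1 ++ J LA.tail := by
        rw [hLAeq]; simp
      by_cases hcase : At1 = []
      · -- direct argument (case B')
        have hAt2At : At2 = At := by rw [hAt, hcase]; simp
        have hYY : P ++ x = J LA := by simpa [hcase] using hY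
        have hZ4 : At ++ An = x ++ S := by rw [hZ3, hAt2At]
        have hl4 := congrArg List.length hZ4
        simp at hl4
        obtain ⟨m, hxm, hAnm2⟩ := split_app hZ4 (by omega)
        have hmlen : x.length = At.length + m.length := by
          have := congrArg List.length hxm; simpa using this
        have hm : m ≠ [] := by
          have := congrArg List.length hAnm2
          simp at this
          intro h0; rw [h0] at this; simp at this; omega
        have hWocc : J L = P ++ At ++ (m ++ (x ++ S)) := by
          rw [hLsp]
          simp only [J_append, J_cons, J_nil, List.append_nil]
          rw [← hYY, hxm, hAnm2]
          simp [List.append_assoc]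
        obtain ⟨L1, a', L2, hLsp2, hJ2⟩ := sync f hi hii L P At _ t0 hf hne
          (hf (t0, At) (by rw [hLshape]; simp))
          (hne (t0, At) (by rw [hLshape]; simp)) hWocc
        cases L1 with
        | cons q1 L1' =>
          exfalso
          have hq1 : q1 = (a1, A1) := by
            rw [hhead] at hLsp2
            exact (List.cons_eq_cons.1 hLsp2.symm).1
          subst hq1
          have := congrArg List.length hJ2
          simp at this
          omega
        | nil =>
          have hP0 : P = [] := by simpa using hJ2.symm
          have hA1At : A1 = At ∧ a1 = a' := by
            rw [hhead] at hLsp2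
            have := (List.cons_eq_cons.1 hLsp2).1
            simp [Prod.ext_iff] at this
            exact ⟨this.2, this.1⟩
          obtain ⟨hA1At, -⟩ := hA1At
          have hxLA : x = A1 ++ J LA.tail := by
            rw [← hJLA, ← hYY, hP0]; simp
          have hJm : J LA.tail = m := by
            have : A1 ++ J LA.tail = A1 ++ m := by
              rw [← hxLA, hxm, hA1At]
            exact List.append_cancel_left this
          obtain ⟨⟨a2, A2⟩, LA3, hLA3⟩ : ∃ q LA3, LA.tail = q :: LA3 := by
            cases h : LA.tail with
            | nil => exact absurd h hLmid0
            | cons q LA3 => exact ⟨q, LA3, rfl⟩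
          have hA2mem : (a2, A2) ∈ L := by
            rw [hLshape, hLA3]; simp
          have hA2An : A2 <:+: An := by
            refine ⟨[], J LA3 ++ S, ?_⟩
            rw [hAnm2, ← hJm, hLA3]
            simp [List.append_assoc]
          obtain ⟨ha2an, hA2eq⟩ := hi a2 an A2 An (hf _ hA2mem)
            (hf (an, An) (by rw [hLshape]; simp)) hA2An
          have l5 := congrArg List.length hAnm2
          have l6 := congrArg List.length hJm
          have l7 := congrArg List.length hA2eq
          rw [hLA3] at l6
          simp only [J_cons, List.length_append] at l6
          simp at l5
          have hLA30 : LA3 = [] := by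
            refine J_nil_of_ne (fun q hq => hne q ?_) (List.eq_nil_of_length_eq_zero (by omega))
            rw [hLshape, hLA3]; simp [hq]
          have hS0 : S = [] := List.eq_nil_of_length_eq_zero (by omega)
          have ht0a1 : t0 = a1 := by
            obtain ⟨h8, -⟩ := hi t0 a1 At A1 (hf (t0, At) (by rw [hLshape]; simp))
              (hf (a1, A1) (by rw [hLshape]; simp)) (hA1At ▸ List.infix_rfl)
            exact h8
          refine sq_of (v := [a1, a2]) (s := []) (t := []) hsf (by simp) ?_
          rw [hLshape, hLA3, hLA30]
          simp [ht0a1, ha2an]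
      · -- reversed CORE
        have hRLL : RL L = (an, An.reverse) :: ([] ++ (t0, At.reverse) ::
            (RL LA.tail ++ [(a1, A1.reverse)])) := by
          rw [hLshape]
          simp [RL_append, RL_cons]
        have h1' : S.reverse ++ x.reverse = An.reverse ++ (J ([] : List (α × List β)) ++ At2.reverse) := by
          have := congrArg List.reverse hZ3
          simp only [List.reverse_append] at this
          simpa using this
        have h2' : x.reverse ++ P.reverse = At1.reverse ++ (J (RL LA.tail) ++ A1.reverse) := by
          have := congrArg List.reverse hY
          rw [hJLA] at this
          simp only [List.reverse_append] at this
          rw [J_RL]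
          simpa [List.append_assoc] using this
        exact core (fR f) (Hi_fR hi) (Hii_fR hii) (Hiii_fR hiii)
          an t0 a1 An.reverse At.reverse A1.reverse At2.reverse At1.reverse
          S.reverse x.reverse P.reverse [] (RL LA.tail)
          (fun h0 => hLmid0 (RL_eq_nil_iff.1 h0))
          (by rw [← hRLL]; exact hf_RL hf) (by rw [← hRLL]; exact hne_RL hne)
          (by rw [← hRLL, fst_RL]; exact sqf_reverse hsf)
          (by simpa using hx) (by rw [hAt]; simp) (by simpa using hcase)
          h1' h2' (by simpa using hS) (by simpa using hP)

lemma RL_RL (L : List (α × List β)) : RL (RL L) = L := by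
  induction L with
  | nil => rfl
  | cons p L' IH =>
    rw [RL_cons, RL_append, RL_cons, IH]
    simp

theorem final {α β : Type*} (f : α → Set (List β)) (u : List α)
    (hu : SquareFree u)
    (hI : ∀ v : List α, v <:+: u → v.length ≤ 3 → ∀ W ∈ SubstSet f v, SquareFree W)
    (hII_i : ∀ (a b : α) (A B : List β), A ∈ f a → B ∈ f b →
      A <:+: B → a = b ∧ A = B)
    (hII_ii : ∀ (a b c : α) (A B C : List β), A ∈ f a → B ∈ f b → C ∈ f c →
      ∀ p s : List β, A ++ B = p ++ C ++ s → p = [] ∨ s = [])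
    (hII_iii : ∀ (a b c : α) (A B C : List β), A ∈ f a → B ∈ f b → C ∈ f c →
      ∀ A' A'' B' B'' : List β, A = A' ++ A'' → B = B' ++ B'' → C = A' ++ B'' →
        c = a ∨ c = b) :
    ∀ W ∈ SubstSet f u, SquareFree W := by
  intro W hW x hx hinf
  obtain ⟨L, huL, hfL, hWJ⟩ := substset_elim f u W hW
  obtain ⟨P, S', hPS⟩ := hinf
  rw [hWJ] at hPS
  by_cases hemp : ∃ p ∈ L, p.2 = []
  · obtain ⟨p0, hp0, hp02⟩ := hemp
    have hnil : ([] : List β) ∈ f p0.1 := by rw [← hp02]; exact hfL p0 hp0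
    have hall : ∀ l ∈ L.map Prod.snd, l = [] := by
      intro l hl
      obtain ⟨q, hq, rfl⟩ := List.mem_map.1 hl
      exact ((hII_i p0.1 q.1 [] q.2 hnil (hfL q hq) List.nil_infix).2).symm
    have hJ0 : J L = [] := List.flatten_eq_nil_iff.2 hall
    rw [hJ0] at hPS
    have h9 := congrArg List.length hPS
    simp only [List.length_append, List.length_nil] at h9
    exact hx (List.eq_nil_of_length_eq_zero (by omega))
  · push_neg at hemp
    -- strip from the left
    obtain ⟨LA0, c1, C1, LB0, C11, C12, hsp1, hC1, hC12, hY1, hZ1⟩ :=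
      splitmid L P ((x ++ x) ++ S')
        (by rw [← hPS]; simp [List.append_assoc]) (by simp [hx])
    have hJL2 : J ((c1, C1) :: LB0) = (C11 ++ (x ++ x)) ++ S' := by
      rw [J_cons, hC1, List.append_assoc, ← hZ1]
      simp [List.append_assoc]
    -- strip from the right (via reversal)
    obtain ⟨MA, c2, C2, MB, C21, C22, hsp2, hC2, hC22, hY2, hZ2⟩ :=
      splitmid (RL ((c1, C1) :: LB0)) S'.reverse (C11 ++ (x ++ x)).reverse
        (by rw [J_RL, hJL2]; simp) (by simp [hx])
    have hL2eq : (c1, C1) :: LB0 = (RL MB ++ [(c2, C2.reverse)]) ++ RL MA := by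
      have := congrArg RL hsp2
      rw [RL_RL, RL_append, RL_cons] at this
      simpa using this
    have hJfin : J (RL MB ++ [(c2, C2.reverse)]) = C11 ++ (x ++ x) ++ C21.reverse := by
      have h7 : J ((c2, C2) :: MB) = C21 ++ (C11 ++ (x ++ x)).reverse := by
        rw [J_cons, hC2, List.append_assoc, ← hZ2]
      have h8 := congrArg List.reverse h7
      rw [← J_RL, RL_cons] at h8
      simpa [List.append_assoc] using h8
    -- the stripped list
    set Lfin := RL MB ++ [(c2, C2.reverse)] with hLfin
    obtain ⟨q0, Lfin', hq0⟩ : ∃ q0 Lfin', Lfin = q0 :: Lfin' := by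
      cases h : Lfin with
      | nil => exact absurd h (by rw [hLfin]; simp)
      | cons q0 Lfin' => exact ⟨q0, Lfin', rfl⟩
    have hq0C1 : q0 = (c1, C1) := by
      rw [hq0] at hL2eq
      exact (List.cons_eq_cons.1 hL2eq).1.symm
    have hsub : ∀ p ∈ Lfin, p ∈ L := by
      intro p hp
      rw [hsp1, hL2eq]
      simp only [List.mem_append, List.mem_cons]
      have : p ∈ (RL MB ++ [(c2, C2.reverse)]) ++ RL MA := List.mem_append_left _ hp
      simp only [List.mem_append] at this ⊢
      tauto
    have hinfixu : Lfin.map Prod.fst <:+: u := by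
      refine ⟨LA0.map Prod.fst, (RL MA).map Prod.fst, ?_⟩
      rw [huL, hsp1, hL2eq]
      simp [Lfin]
    have hsffin : SquareFree (Lfin.map Prod.fst) := sqf_infix hu hinfixu
    have hC21len : C21.length < C2.length := by
      have := congrArg List.length hC2
      simp at this
      have := List.length_pos_iff.2 hC22
      omega
    refine main f hII_i hII_ii hII_iii Lfin (fun p hp => hfL p (hsub p hp))
      (fun p hp => hemp p (hsub p hp)) hsffin ?_ x C11 C21.reverse hx
      (by rw [hJfin]) c1 C1 Lfin' (hq0C1 ▸ hq0) (by
        have := congrArg List.length hC1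
        simp at this
        have := List.length_pos_iff.2 hC12
        omega)
      c2 C2.reverse (RL MB) hLfin (by simpa using hC21len)
    · intro hlen3
      have := hI (Lfin.map Prod.fst) hinfixu (by simpa using hlen3) (J Lfin)
        (substset_intro f Lfin (fun p hp => hfL p (hsub p hp)))
      exact this

end SqfSub

/-- Theorem 6: sufficient conditions for a set-valued substitution `f` to map a
square-free word `u` to a set of square-free words. -/
theorem squarefree_substitution {α β : Type*} (f : α → Set (List β)) (u : List α)
    (hu : SquareFree u)
    (hI : ∀ v : List α, v <:+: u → v.length ≤ 3 → ∀ W ∈ SubstSet f v, SquareFree W)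
    (hII_i : ∀ (a b : α) (A B : List β), A ∈ f a → B ∈ f b →
      A <:+: B → a = b ∧ A = B)
    (hII_ii : ∀ (a b c : α) (A B C : List β), A ∈ f a → B ∈ f b → C ∈ f c →
      ∀ p s : List β, A ++ B = p ++ C ++ s → p = [] ∨ s = [])
    (hII_iii : ∀ (a b c : α) (A B C : List β), A ∈ f a → B ∈ f b → C ∈ f c →
      ∀ A' A'' B' B'' : List β, A = A' ++ A'' → B = B' ++ B'' → C = A' ++ B'' →
        c = a ∨ c = b) :
    ∀ W ∈ SubstSet f u, SquareFree W := by
  exact SqfSub.final f u hu hI hII_i hII_ii hII_iii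
end

section
/- Let w be a word over an alphabet Σ with |w| ≥ 2. If the circular word ⟨w⟩ is square-free, then every circumnavigation of ⟨w⟩ is square-free. -/
/-- The circular word `⟨w⟩` is square-free: every conjugate (rotation) of `w` is square-free. -/
def CircSquareFree {α : Type*} (w : List α) : Prop :=
  ∀ u : List α, u ~r w → SquareFree u

/-- The circular word `⟨w⟩` is extremal square-free. -/
def ExtremalCircSquareFree {α : Type*} (w : List α) : Prop :=
  CircSquareFree w ∧
    ∀ (w' w'' : List α) (a : α), w = w' ++ w'' → ¬ CircSquareFree (w' ++ [a] ++ w'')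

/-- Lemma 9: if `|w| ≥ 2` and the circular word `⟨w⟩` is square-free, then every
circumnavigation `a v a` of `⟨w⟩` (where `a :: v` is a conjugate of `w`) is square-free. -/
theorem circumnavigations_squarefree {α : Type*} (w : List α) (hw : 2 ≤ w.length)
    (hsf : CircSquareFree w) :
    ∀ (a : α) (v : List α), (a :: v) ~r w → SquareFree (a :: v ++ [a]) := by
  intro a v hrot
  have hsf1 : SquareFree (a :: v) := hsf _ hrot
  have hrot2 : (v ++ [a]) ~r w := by
    have h : (a :: v) ~r (v ++ [a]) := ⟨1, by simp [List.rotate_cons_succ]⟩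
    exact h.symm.trans hrot
  have hsf2 : SquareFree (v ++ [a]) := hsf _ hrot2
  intro x hx hinf
  obtain ⟨s, t, hst⟩ := hinf
  rcases t.eq_nil_or_concat with rfl | ⟨t', c, rfl⟩
  · -- square is a suffix
    cases s with
    | cons b s' =>
      -- drop the first letter: square inside v ++ [a]
      have hb : b = a := by
        have := congrArg (·.head?) hst; simpa using this
      rw [hb] at hst
      have hst' : s' ++ (x ++ x) ++ [] = v ++ [a] := by
        simpa using congrArg List.tail hst
      exact hsf2 x hx ⟨s', [], hst'⟩
    | nil =>
      -- x ++ x = a :: v ++ [a]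
      simp only [List.nil_append, List.append_nil] at hst
      obtain ⟨y, rfl⟩ : ∃ y, x = a :: y := by
        cases x with
        | nil => exact absurd rfl hx
        | cons b y =>
          refine ⟨y, ?_⟩
          have : b = a := by
            have := congrArg (·.head?) hst; simpa using this
          rw [this]
      have hyv : y ++ a :: y = v ++ [a] := by
        have := congrArg List.tail hst
        simpa using this
      rcases y.eq_nil_or_concat with rfl | ⟨z, c, rfl⟩
      · -- then v = [], contradicting |w| ≥ 2
        simp only [List.nil_append] at hyv
        have hv : v = [] := by simpa using hyv.symm
        have hlen : w.length = 1 := by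
          obtain ⟨n, hn⟩ := hrot
          rw [← hn, List.length_rotate, hv]; rfl
        omega
      · -- y = z ++ [c]; deduce c = a and find square aa in a :: v
        have h2 : (z ++ [c] ++ [a] ++ z) ++ [c] = v ++ [a] := by
          simpa [List.append_assoc] using hyv
        have hca : c = a ∧ z ++ [c] ++ [a] ++ z = v := by
          have := List.append_inj' h2 rfl
          exact ⟨by simpa using this.2, this.1⟩
        obtain ⟨rfl, hv⟩ := hca
        refine hsf1 [c] (by simp) ⟨c :: z, z, ?_⟩
        rw [← hv]; simp
  · -- t nonempty: square inside a :: v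
    have h2 : (s ++ (x ++ x) ++ t') ++ [c] = (a :: v) ++ [a] := by
      simpa [List.append_assoc] using hst
    have := List.append_inj' h2 rfl
    exact hsf1 x hx ⟨s, t', this.1⟩
end

section
/- Let ⟨w⟩ be a square-free circular word of length at least 2 over the alphabet {0, 1, 2}, and let W be any word in the set h(w). Then the circular word ⟨W⟩ is square-free and walkable in the digraph D. -/
/-- The identity permutation `()` of `Γ = {a,b,c}` (with `a = 0`, `b = 1`, `c = 2`). -/
def pid : Equiv.Perm (Fin 3) := 1
/-- The permutation `(ab)`. -/
def pab : Equiv.Perm (Fin 3) := Equiv.swap 0 1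
/-- The permutation `(ac)`. -/
def pac : Equiv.Perm (Fin 3) := Equiv.swap 0 2
/-- The permutation `(bc)`. -/
def pbc : Equiv.Perm (Fin 3) := Equiv.swap 1 2
/-- The permutation `(abc)`, i.e. `a ↦ b ↦ c ↦ a`. -/
def pabc : Equiv.Perm (Fin 3) := (Equiv.swap 0 1).trans (Equiv.swap 0 2)
/-- The permutation `(acb)`, i.e. `a ↦ c ↦ b ↦ a`. -/
def pacb : Equiv.Perm (Fin 3) := (Equiv.swap 0 2).trans (Equiv.swap 0 1)

/-- The vertex set `V(D) = S_Γ ∪ S̃_Γ`: a permutation `π` together with a Boolean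
which is `false` for the plain letter `π` and `true` for its mirror image `π̃`. -/
abbrev V : Type := Equiv.Perm (Fin 3) × Bool

/-- The 24 arcs of the digraph `D`. -/
def arcs : List (V × V) :=
  [((pid,false),(pab,true)), ((pac,true),(pid,false)), ((pab,false),(pid,true)),
   ((pacb,true),(pab,false)), ((pid,true),(pac,false)), ((pac,false),(pabc,true)),
   ((pabc,true),(pbc,false)), ((pbc,false),(pacb,true)), ((pabc,false),(pac,true)),
   ((pbc,true),(pabc,false)), ((pab,true),(pacb,false)), ((pacb,false),(pbc,true)),
   ((pid,false),(pbc,false)), ((pbc,false),(pid,false)), ((pab,false),(pabc,false)),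
   ((pabc,false),(pab,false)), ((pac,false),(pacb,false)), ((pacb,false),(pac,false)),
   ((pbc,true),(pid,true)), ((pid,true),(pbc,true)), ((pabc,true),(pab,true)),
   ((pab,true),(pabc,true)), ((pacb,true),(pac,true)), ((pac,true),(pacb,true))]

/-- The arc relation of the digraph `D`. -/
def Arc (x y : V) : Prop := (x, y) ∈ arcs

/-- For `x = (π, false)` this is `W_π` (permute letters by `π`);
for `x = (π, true)` this is `W_π̃` (the reversal of `W_π`). -/
def applyV (x : V) (w : List (Fin 3)) : List (Fin 3) :=
  if x.2 then (w.map x.1).reverse else w.map x.1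

/-- The circular word `⟨w⟩` is walkable in `D`: every conjugate of `w` is a walk in `D`. -/
def CircWalkable (w : List V) : Prop :=
  ∀ u : List V, u ~r w → List.Chain' Arc u

/-- The substitution `h` from words over `{0,1,2}` to sets of words over `V(D)`. -/
def hsub : Fin 3 → Set (List V) :=
  ![{[(pid,false),(pab,true),(pacb,false),(pac,false),(pabc,true),(pbc,false)]},
    {[(pid,false),(pab,true),(pabc,true),(pbc,false),(pacb,true),(pac,true)]},
    {[(pid,false),(pab,true),(pacb,false),(pbc,true),(pabc,false),(pac,true)],
     [(pid,false),(pab,true),(pacb,false),(pbc,true),(pabc,false),(pab,false),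
      (pabc,false),(pac,true)]}]

section Aux

abbrev mV : V := (pid, false)
def H0 : List V := [(pid,false),(pab,true),(pacb,false),(pac,false),(pabc,true),(pbc,false)]
def H1 : List V := [(pid,false),(pab,true),(pabc,true),(pbc,false),(pacb,true),(pac,true)]
def H2a : List V := [(pid,false),(pab,true),(pacb,false),(pbc,true),(pabc,false),(pac,true)]
def H2b : List V := [(pid,false),(pab,true),(pacb,false),(pbc,true),(pabc,false),(pab,false),(pabc,false),(pac,true)]
def blocks4 : List (List V) := [H0, H1, H2a, H2b]

lemma mem_hsub0 {A} : A ∈ hsub 0 ↔ A = H0 := by simp [hsub, H0]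
lemma mem_hsub1 {A} : A ∈ hsub 1 ↔ A = H1 := by simp [hsub, H1]
lemma mem_hsub2 {A} : A ∈ hsub 2 ↔ A = H2a ∨ A = H2b := by simp [hsub, H2a, H2b]

lemma hsub_elim {a : Fin 3} {A} (hA : A ∈ hsub a) :
    (a = 0 ∧ A = H0) ∨ (a = 1 ∧ A = H1) ∨ (a = 2 ∧ (A = H2a ∨ A = H2b)) := by
  fin_cases a
  · exact Or.inl ⟨rfl, mem_hsub0.1 hA⟩
  · exact Or.inr (Or.inl ⟨rfl, mem_hsub1.1 hA⟩)
  · exact Or.inr (Or.inr ⟨rfl, mem_hsub2.1 hA⟩)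

lemma hsub_cases {a : Fin 3} {A} (hA : A ∈ hsub a) : A ∈ blocks4 := by
  rcases hsub_elim hA with ⟨_, rfl⟩ | ⟨_, rfl⟩ | ⟨_, rfl | rfl⟩ <;> decide

lemma hsub_decode {a b : Fin 3} {A} (ha : A ∈ hsub a) (hb : A ∈ hsub b) : a = b := by
  rcases hsub_elim ha with ⟨rfl, rfl⟩ | ⟨rfl, rfl⟩ | ⟨rfl, h⟩ <;>
    rcases hsub_elim hb with ⟨rfl, h2⟩ | ⟨rfl, h2⟩ | ⟨rfl, h2⟩ <;>
    first
      | rfl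
      | (exfalso; rcases h with rfl | rfl <;> revert h2 <;> decide)
      | (exfalso; revert h2; decide)

instance : DecidableRel Arc := fun x y => inferInstanceAs (Decidable ((x,y) ∈ arcs))

lemma blocks_len : ∀ A ∈ blocks4, 6 ≤ A.length ∧ A.length ≤ 8 := by decide
lemma blocks_head : ∀ A ∈ blocks4, A.getD 0 mV = mV := by decide
lemma blocks_mtail : ∀ A ∈ blocks4, ∀ t < 8, 1 ≤ t → t < A.length → A.getD t mV ≠ mV := by decide
lemma blocks_noSquare : ∀ A ∈ blocks4, ∀ p < 8, ∀ l < 8, 1 ≤ l → p + 2*l ≤ A.length →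
    ∃ t < l, A.getD (p+t) mV ≠ A.getD (p+l+t) mV := by decide
lemma blocks_pref4 : ∀ A ∈ blocks4, ∀ B ∈ blocks4,
    (∀ t < 4, A.getD t mV = B.getD t mV) →
    (A = B ∨ (A = H2a ∧ B = H2b) ∨ (A = H2b ∧ B = H2a)) := by decide
lemma blocks_suf3 : ∀ A ∈ blocks4, ∀ B ∈ blocks4,
    (∀ t < 3, A.getD (A.length - 3 + t) mV = B.getD (B.length - 3 + t) mV) →
    (A = B ∨ (A = H2a ∧ B = H2b) ∨ (A = H2b ∧ B = H2a)) := by decide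
lemma blocks_chain : ∀ A ∈ blocks4, List.Chain' Arc (A ++ [mV]) := by
  intro A hA
  simp only [blocks4, List.mem_cons, List.not_mem_nil, or_false] at hA
  rcases hA with rfl|rfl|rfl|rfl <;>
    simp only [List.Chain', H0, H1, H2a, H2b, List.cons_append, List.nil_append, List.isChain_cons_cons,
      List.isChain_singleton, and_true] <;> decide


lemma substset_forall2 {w : List (Fin 3)} {W : List V} (h : W ∈ SubstSet hsub w) :
    ∃ Bs : List (List V), List.Forall₂ (fun a A => A ∈ hsub a) w Bs ∧ W = Bs.flatten := by
  induction w generalizing W with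
  | nil =>
    simp only [SubstSet, Set.mem_singleton_iff] at h
    exact ⟨[], .nil, by simp [h]⟩
  | cons a w ih =>
    obtain ⟨A, hA, B, hB, rfl⟩ := h
    obtain ⟨Bs, h1, rfl⟩ := ih hB
    exact ⟨A :: Bs, .cons hA h1, by simp⟩

def blkf (Bs : List (List V)) (j : ℕ) : List V := Bs.getD (j % Bs.length) []

def sf (Bs : List (List V)) : ℕ → ℕ
  | 0 => 0
  | j+1 => sf Bs j + (blkf Bs j).length

lemma list_eq_of_getD {A B : List V} (hl : A.length = B.length)
    (h : ∀ i < A.length, A.getD i mV = B.getD i mV) : A = B := by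
  apply List.ext_getElem hl
  intro i h1 h2
  rw [← List.getD_eq_getElem A mV h1, ← List.getD_eq_getElem B mV h2]
  exact h i h1

lemma join_getD : ∀ (Bs : List (List V)) (j t : ℕ), j < Bs.length →
    t < (Bs.getD j []).length →
    Bs.flatten.getD (((Bs.take j).map List.length).sum + t) mV = (Bs.getD j []).getD t mV := by
  intro Bs
  induction Bs with
  | nil => intro j t hj; simp at hj
  | cons A Bs ih =>
    intro j t hj ht
    cases j with
    | zero =>
      simp only [List.take_zero, List.map_nil, List.sum_nil, Nat.zero_add, List.flatten_cons,
        List.getD_cons_zero] at *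
      rw [List.getD_append _ _ _ _ ht]
    | succ j =>
      simp only [List.getD_cons_succ] at ht ⊢
      simp only [List.take_succ_cons, List.map_cons, List.sum_cons, List.flatten_cons]
      rw [Nat.add_assoc, List.getD_append_right _ _ _ _ (Nat.le_add_right _ _),
        Nat.add_sub_cancel_left]
      exact ih j t (Nat.lt_of_succ_lt_succ hj) ht

lemma sf_succ (Bs : List (List V)) (j : ℕ) :
    sf Bs (j+1) = sf Bs j + (blkf Bs j).length := rfl

lemma blkf_period (Bs : List (List V)) (j : ℕ) : blkf Bs (j + Bs.length) = blkf Bs j := by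
  simp [blkf, Nat.add_mod_right]

lemma blkf_mem {Bs : List (List V)} (hn : 0 < Bs.length)
    (hb : ∀ i, i < Bs.length → Bs.getD i [] ∈ blocks4) (j : ℕ) : blkf Bs j ∈ blocks4 :=
  hb _ (Nat.mod_lt _ hn)

section Machinery
variable {Bs : List (List V)} (hn : 0 < Bs.length) (hblk : ∀ j, blkf Bs j ∈ blocks4)

include hblk in
lemma blk_len6 (j : ℕ) : 6 ≤ (blkf Bs j).length := (blocks_len _ (hblk j)).1

include hblk in
lemma blk_len8 (j : ℕ) : (blkf Bs j).length ≤ 8 := (blocks_len _ (hblk j)).2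

include hblk in
lemma sf_lb (j c : ℕ) : sf Bs j + 6*c ≤ sf Bs (j+c) := by
  induction c with
  | zero => simp
  | succ c ih =>
    have := blk_len6 hblk (j+c)
    have := sf_succ Bs (j+c)
    have h3 : sf Bs (j + (c+1)) = sf Bs (j + c + 1) := rfl
    omega

include hblk in
lemma sf_ub (j c : ℕ) : sf Bs (j+c) ≤ sf Bs j + 8*c := by
  induction c with
  | zero => simp
  | succ c ih =>
    have := blk_len8 hblk (j+c)
    have := sf_succ Bs (j+c)
    have h3 : sf Bs (j + (c+1)) = sf Bs (j + c + 1) := rfl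
    omega

include hblk in
lemma sf_strictMono : StrictMono (sf Bs) := by
  apply strictMono_nat_of_lt_succ
  intro j
  have := blk_len6 hblk j
  have := sf_succ Bs j
  omega

lemma sf_eq_take (j : ℕ) (hj : j ≤ Bs.length) :
    sf Bs j = ((Bs.take j).map List.length).sum := by
  induction j with
  | zero => simp [sf]
  | succ j ih =>
    have hj' : j < Bs.length := hj
    rw [sf_succ, ih (le_of_lt hj')]
    have h2 : ((Bs.map List.length).take (j+1)).sum = ((Bs.map List.length).take j).sum
        + (Bs.map List.length).get ⟨j, by simpa⟩ :=
      List.sum_take_succ _ _ _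
    simp only [List.map_take]
    rw [h2]
    congr 1
    simp only [List.get_eq_getElem, List.getElem_map]
    simp only [blkf, Nat.mod_eq_of_lt hj']
    rw [List.getD_eq_getElem _ _ hj']

lemma sf_top : sf Bs Bs.length = Bs.flatten.length := by
  rw [sf_eq_take _ le_rfl, List.take_length, List.length_flatten]

include hn in
lemma sf_period (j : ℕ) : sf Bs (j + Bs.length) = sf Bs j + Bs.flatten.length := by
  induction j with
  | zero => simpa [sf] using sf_top (Bs := Bs)
  | succ j ih =>
    have h1 : j + 1 + Bs.length = (j + Bs.length) + 1 := by omega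
    rw [h1, sf_succ, sf_succ, ih, blkf_period]
    omega

def FW (W : List V) (q : ℕ) : V := W.getD (q % W.length) mV

lemma FW_period (W : List V) (q : ℕ) : FW W (q + W.length) = FW W q := by
  simp [FW, Nat.add_mod_right]

include hn hblk in
lemma FW_block : ∀ j t, t < (blkf Bs j).length →
    FW Bs.flatten (sf Bs j + t) = (blkf Bs j).getD t mV := by
  intro j
  induction j using Nat.strong_induction_on with
  | _ j ih =>
    intro t ht
    by_cases hj : j < Bs.length
    · have h1 : sf Bs j + t < Bs.flatten.length := by
        have h2 : sf Bs (j+1) ≤ sf Bs Bs.length :=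
          (sf_strictMono hblk).monotone (by omega)
        rw [sf_top] at h2
        have := sf_succ Bs j
        omega
      have hb : blkf Bs j = Bs.getD j [] := by simp [blkf, Nat.mod_eq_of_lt hj]
      rw [FW, Nat.mod_eq_of_lt h1, hb]
      rw [sf_eq_take _ (le_of_lt hj)]
      exact join_getD Bs j t hj (hb ▸ ht)
    · have hj2 : j - Bs.length + Bs.length = j := by omega
      have hb2 : blkf Bs j = blkf Bs (j - Bs.length) := by
        have := blkf_period Bs (j - Bs.length); rw [hj2] at this; exact this
      have hs2 : sf Bs j = sf Bs (j - Bs.length) + Bs.flatten.length := by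
        have := sf_period hn (j - Bs.length); rw [hj2] at this; exact this
      rw [hb2] at ht ⊢
      rw [hs2, Nat.add_right_comm, FW_period]
      exact ih (j - Bs.length) (by omega) t ht

include hn hblk in
lemma exists_block (q : ℕ) : ∃ j, sf Bs j ≤ q ∧ q < sf Bs (j+1) := by
  induction q with
  | zero => exact ⟨0, le_rfl, by have := blk_len6 hblk 0; have := sf_succ Bs 0; simp [sf]; omega⟩
  | succ q ih =>
    obtain ⟨j, h1, h2⟩ := ih
    by_cases h : q + 1 < sf Bs (j+1)
    · exact ⟨j, by omega, h⟩
    · refine ⟨j+1, by omega, ?_⟩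
      have := blk_len6 hblk (j+1)
      have := sf_succ Bs (j+1)
      omega

include hn hblk in
lemma FW_m_iff (j t : ℕ) (ht : t < (blkf Bs j).length) :
    FW Bs.flatten (sf Bs j + t) = mV ↔ t = 0 := by
  rw [FW_block hn hblk j t ht]
  constructor
  · intro h
    by_contra hne
    exact blocks_mtail _ (hblk j) t (by have := blk_len8 hblk j; omega) (by omega) ht h
  · rintro rfl
    exact blocks_head _ (hblk j)

include hn hblk in
lemma sf_m (j : ℕ) : FW Bs.flatten (sf Bs j) = mV := by
  have := blk_len6 hblk j
  simpa using (FW_m_iff hn hblk j 0 (by omega)).2 rfl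

include hn hblk in
lemma mpos {q : ℕ} (h : FW Bs.flatten q = mV) : ∃ j, sf Bs j = q := by
  obtain ⟨j, h1, h2⟩ := exists_block hn hblk q
  refine ⟨j, ?_⟩
  have ht : q - sf Bs j < (blkf Bs j).length := by have := sf_succ Bs j; omega
  have := (FW_m_iff hn hblk j (q - sf Bs j) ht).1 (by rwa [show sf Bs j + (q - sf Bs j) = q by omega])
  omega

include hn hblk in
lemma between {j q : ℕ} (h1 : sf Bs j < q) (h2 : q < sf Bs (j+1)) : FW Bs.flatten q ≠ mV := by
  intro h
  have ht : q - sf Bs j < (blkf Bs j).length := by have := sf_succ Bs j; omega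
  have := (FW_m_iff hn hblk j (q - sf Bs j) ht).1 (by rwa [show sf Bs j + (q - sf Bs j) = q by omega])
  omega

include hn hblk in
lemma next_m {j q : ℕ} (h : FW Bs.flatten q = mV) (h1 : sf Bs j < q) : sf Bs (j+1) ≤ q := by
  obtain ⟨j', rfl⟩ := mpos hn hblk h
  have : j < j' := (sf_strictMono hblk).lt_iff_lt.1 h1
  exact (sf_strictMono hblk).monotone (by omega)

end Machinery


lemma w_no_square (w : List (Fin 3)) (hsf : CircSquareFree w) (hn : 0 < w.length)
    (j k : ℕ) (hk : 1 ≤ k) (h2k : 2*k ≤ w.length)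
    (h : ∀ t < k, w.getD ((j+t) % w.length) 0 = w.getD ((j+k+t) % w.length) 0) : False := by
  set n := w.length with hnn
  set r := j % n with hr
  set u := w.rotate r with hu
  have hul : u.length = n := by simp [hu, hnn]
  have hurot : u ~r w := (List.IsRotated.symm ⟨r, rfl⟩)
  set x : List (Fin 3) := (List.range k).map (fun t => w.getD ((j+t) % n) 0) with hx
  have hxl : x.length = k := by simp [hx]
  have hgu : ∀ i, (hi : i < 2*k) → u[i]'(by omega) = w.getD ((j+i) % n) 0 := by
    intro i hi
    have hiu : i < u.length := by omega
    rw [List.getElem_rotate]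
    rw [List.getD_eq_getElem _ _ (Nat.mod_lt _ hn)]
    congr 1
    show (i + r) % n = (j + i) % n
    rw [hr, Nat.add_comm i (j % n), Nat.mod_add_mod, Nat.add_comm j i]
  have hclaim : x ++ x = u.take (2*k) := by
    apply List.ext_getElem
    · simp [hxl, hul]; omega
    · intro i h1 h2
      have hi2 : i < 2*k := by simp [hxl] at h1; omega
      rw [List.getElem_take]
      rw [hgu i hi2]
      by_cases hik : i < k
      · rw [List.getElem_append_left (by omega)]
        simp [hx]
      · rw [List.getElem_append_right (by rw [hxl]; omega)]
        have : x[i - x.length]'(by rw [hxl] at *; omega) = w.getD ((j+(i-k)) % n) 0 := by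
          simp [hx, hxl]
        rw [this, h (i-k) (by omega)]
        congr 2
        omega
  have hinf : x ++ x <:+: u := by
    rw [hclaim]; exact (List.take_prefix _ _).isInfix
  exact hsf u hurot x (by intro hempty; rw [hempty] at hxl; simp at hxl; omega) hinf

set_option maxHeartbeats 1000000 in
lemma master (w : List (Fin 3)) (hw : 2 ≤ w.length) (hsf : CircSquareFree w)
    (Bs : List (List V)) (hf : List.Forall₂ (fun a A => A ∈ hsub a) w Bs)
    (P l : ℕ) (hl : 1 ≤ l) (h2l : 2*l ≤ Bs.flatten.length) (hP : Bs.flatten.length ≤ P)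
    (hsq : ∀ t < l, FW Bs.flatten (P+t) = FW Bs.flatten (P+l+t)) : False := by
  classical
  have hlen : w.length = Bs.length := hf.length_eq
  have hn : 0 < Bs.length := by omega
  have hmemi : ∀ i, i < Bs.length → Bs.getD i [] ∈ hsub (w.getD i 0) := by
    intro i hi
    obtain ⟨-, hg⟩ := List.forall₂_iff_get.mp hf
    have h3 := hg i (by omega) hi
    rwa [List.get_eq_getElem, List.get_eq_getElem,
      ← List.getD_eq_getElem w 0 (by omega), ← List.getD_eq_getElem Bs [] hi] at h3
  set lt : ℕ → Fin 3 := fun j => w.getD (j % Bs.length) 0 with hlt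
  have hblkh : ∀ j, blkf Bs j ∈ hsub (lt j) := fun j => by
    simp only [hlt, blkf]
    exact hmemi (j % Bs.length) (Nat.mod_lt _ hn)
  have hblk : ∀ j, blkf Bs j ∈ blocks4 := fun j => hsub_cases (hblkh j)
  have hdeceq : ∀ i j, blkf Bs i = blkf Bs j → lt i = lt j :=
    fun i j hij => hsub_decode (hblkh i) (hij ▸ hblkh j)
  have hFb : ∀ j t, t < (blkf Bs j).length →
      FW Bs.flatten (sf Bs j + t) = (blkf Bs j).getD t mV := FW_block hn hblk
  have hmono := sf_strictMono (Bs := Bs) hblk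
  have hstop : sf Bs Bs.length = Bs.flatten.length := sf_top
  have hL12 : 12 ≤ Bs.flatten.length := by
    have h1 := sf_lb hblk 0 Bs.length
    rw [Nat.zero_add] at h1
    have h0 : sf Bs 0 = 0 := rfl
    omega
  have noM : ∀ q, P + l ≤ q → q < P + 2*l → FW Bs.flatten q = FW Bs.flatten (q - l) := by
    intro q h1 h2
    have h3 := hsq (q - (P+l)) (by omega)
    rw [show P + (q - (P+l)) = q - l by omega, show P + l + (q-(P+l)) = q by omega] at h3
    exact h3.symm
  have hwsq : ∀ jst k, 1 ≤ k → 2*k ≤ Bs.length →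
      (∀ t < k, lt (jst+t) = lt (jst+k+t)) → False := by
    intro jst k hk1 h2k hsq'
    apply w_no_square w hsf (by omega) jst k hk1 (by omega)
    intro t ht
    have h3 := hsq' t ht
    simp only [hlt] at h3
    rw [hlen]
    exact h3
  by_cases hex : ∃ t, t < l ∧ FW Bs.flatten (P + t) = mV
  case neg =>
    obtain ⟨j, hj1, hj2⟩ := exists_block hn hblk P
    have hnm2 : ∀ t, t < 2*l → FW Bs.flatten (P+t) ≠ mV := by
      intro t ht hm
      rcases Nat.lt_or_ge t l with h | h
      · exact hex ⟨t, h, hm⟩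
      · have h3 := noM (P+t) (by omega) (by omega)
        rw [h3, show P + t - l = P + (t - l) by omega] at hm
        exact hex ⟨t - l, by omega, hm⟩
    have hend : P + 2*l ≤ sf Bs (j+1) := by
      by_contra h
      push_neg at h
      have h0 : FW Bs.flatten (sf Bs (j+1)) = mV := sf_m hn hblk (j+1)
      have h3 := hnm2 (sf Bs (j+1) - P) (by omega)
      rw [show P + (sf Bs (j+1) - P) = sf Bs (j+1) by omega] at h3
      exact h3 h0
    have hlenj : sf Bs (j+1) = sf Bs j + (blkf Bs j).length := sf_succ Bs j
    have h8 := blk_len8 hblk j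
    obtain ⟨t, htl, hne⟩ := blocks_noSquare _ (hblk j) (P - sf Bs j) (by omega) l (by omega)
      hl (by omega)
    apply hne
    have e1 := hFb j (P - sf Bs j + t) (by omega)
    have e2 := hFb j (P - sf Bs j + l + t) (by omega)
    rw [show sf Bs j + (P - sf Bs j + t) = P + t by omega] at e1
    rw [show sf Bs j + (P - sf Bs j + l + t) = P + l + t by omega] at e2
    rw [← e1, ← e2]
    exact hsq t htl
  case pos =>
    have hspec := Nat.find_spec hex
    set d := Nat.find hex with hdd
    obtain ⟨hdl, hdm⟩ := hspec
    have hdmin : ∀ t, t < d → FW Bs.flatten (P + t) ≠ mV := fun t ht hm =>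
      Nat.find_min hex (hdd ▸ ht) ⟨by omega, hm⟩
    obtain ⟨j0, hj0⟩ := mpos hn hblk hdm
    have hj01 : 1 ≤ j0 := by
      rcases Nat.eq_zero_or_pos j0 with h | h
      · exfalso; rw [h] at hj0; have : sf Bs 0 = 0 := rfl; omega
      · omega
    obtain ⟨j0p, rfl⟩ : ∃ p, j0 = p + 1 := ⟨j0 - 1, by omega⟩
    obtain ⟨j1, hj11, hj12⟩ := exists_block hn hblk (P + l - 1)
    have hj1l : sf Bs j1 < P + l := by omega
    have hj1g : P + l ≤ sf Bs (j1+1) := by omega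
    have hj0j1 : j0p + 1 ≤ j1 := by
      by_contra h
      push_neg at h
      have h3 : sf Bs (j1+1) ≤ sf Bs (j0p+1) := hmono.monotone (by omega)
      omega
    obtain ⟨k', hk'⟩ : ∃ k', j1 = j0p + 1 + k' := ⟨j1 - (j0p+1), by omega⟩
    set k := k' + 1 with hkk
    have hsj1 : sf Bs (j0p + 1 + k') = sf Bs j1 := by rw [hk']
    set e := P + l - sf Bs (j0p + 1 + k') with hee
    have hel : sf Bs (j0p+1) ≤ sf Bs (j0p + 1 + k') := hmono.monotone (by omega)
    have he1 : 1 ≤ e := by omega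
    have hse : sf Bs (j0p + 1 + k') = P + l - e := by omega
    have held : e + d ≤ l := by omega
    -- synchronization
    have hsync : ∀ t, t < k → sf Bs (j0p + 1 + k + t) = sf Bs (j0p + 1 + t) + l := by
      intro t
      induction t with
      | zero =>
        intro _
        have hm1 : FW Bs.flatten (sf Bs (j0p+1) + l) = mV := by
          rw [hj0, show P + d + l = P + l + d by omega, ← hsq d hdl, ← hj0]
          exact sf_m hn hblk (j0p+1)
        obtain ⟨j', hj'⟩ := mpos hn hblk hm1
        have hj'gt : sf Bs j1 < sf Bs j' := by rw [hj', hj0]; omega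
        have hj'i := hmono.lt_iff_lt.1 hj'gt
        have hup : sf Bs (j1+1) ≤ sf Bs (j0p+1) + l := by
          rw [← hj']
          exact hmono.monotone (by omega)
        have hdown : ¬ (sf Bs (j1+1) < sf Bs (j0p+1) + l) := by
          intro hlt2
          have hq : FW Bs.flatten (sf Bs (j1+1)) = mV := sf_m hn hblk (j1+1)
          have hnoM := noM (sf Bs (j1+1)) hj1g (by rw [hj0] at hlt2; omega)
          rw [hnoM] at hq
          have h3 := hdmin (sf Bs (j1+1) - l - P) (by rw [hj0] at hlt2; omega)
          rw [show P + (sf Bs (j1+1) - l - P) = sf Bs (j1+1) - l by omega] at h3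
          exact h3 hq
        have hz0 : sf Bs (j0p + 1 + k + 0) = sf Bs (j0p + 1 + k) := rfl
        have hz1 : sf Bs (j0p + 1 + 0) = sf Bs (j0p + 1) := rfl
        have hz2 : sf Bs (j0p + 1 + k) = sf Bs (j1 + 1) := by
          rw [show j0p + 1 + k = j1 + 1 by omega]
        omega
      | succ t iht =>
        intro htk
        have ihp := iht (by omega)
        have hbound : sf Bs (j0p + 1 + (t+1)) ≤ sf Bs j1 := hmono.monotone (by omega)
        have hlow : P ≤ sf Bs (j0p + 1 + (t+1)) := by
          have h3 : sf Bs (j0p+1) ≤ sf Bs (j0p + 1 + (t+1)) := hmono.monotone (by omega)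
          omega
        have hm1 : FW Bs.flatten (sf Bs (j0p + 1 + (t+1)) + l) = mV := by
          have h3 := hsq (sf Bs (j0p + 1 + (t+1)) - P) (by omega)
          rw [show P + (sf Bs (j0p + 1 + (t+1)) - P) = sf Bs (j0p + 1 + (t+1)) by omega,
            show P + l + (sf Bs (j0p + 1 + (t+1)) - P) = sf Bs (j0p + 1 + (t+1)) + l by
              omega] at h3
          rw [← h3]
          exact sf_m hn hblk _
        obtain ⟨j', hj'⟩ := mpos hn hblk hm1
        have hstep : sf Bs (j0p + 1 + t) < sf Bs (j0p + 1 + (t+1)) := hmono (by omega)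
        have hgt : sf Bs (j0p + 1 + k + t) < sf Bs j' := by rw [hj', ihp]; omega
        have hgti := hmono.lt_iff_lt.1 hgt
        have hup : sf Bs (j0p + 1 + k + t + 1) ≤ sf Bs (j0p + 1 + (t+1)) + l := by
          rw [← hj']
          exact hmono.monotone (by omega)
        have hdown : ¬ (sf Bs (j0p + 1 + k + t + 1) < sf Bs (j0p + 1 + (t+1)) + l) := by
          intro hlt2
          have hq : FW Bs.flatten (sf Bs (j0p + 1 + k + t + 1)) = mV := sf_m hn hblk _
          have hgtq : sf Bs (j0p + 1 + k + t) < sf Bs (j0p + 1 + k + t + 1) := hmono (by omega)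
          have hq1 : P + l ≤ sf Bs (j0p + 1 + k + t + 1) := by
            have h3 : sf Bs (j0p+1) ≤ sf Bs (j0p + 1 + t) := hmono.monotone (by omega)
            omega
          have hq2 : sf Bs (j0p + 1 + k + t + 1) < P + 2*l := by omega
          have hnoM := noM _ hq1 hq2
          rw [hnoM] at hq
          have hbet := between hn hblk (j := j0p + 1 + t)
            (q := sf Bs (j0p + 1 + k + t + 1) - l) (by omega)
            (by
              have hz : sf Bs (j0p + 1 + t + 1) = sf Bs (j0p + 1 + (t+1)) := rfl
              omega)
          exact hbet hq
        have hz3 : sf Bs (j0p + 1 + k + (t+1)) = sf Bs (j0p + 1 + k + t + 1) := rfl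
        omega
    -- block equalities
    have hblkeq : ∀ t, t + 1 < k → blkf Bs (j0p+1+t) = blkf Bs (j0p+1+k+t) := by
      intro t ht
      have s1 := hsync t (by omega)
      have s2' := hsync (t+1) (by omega)
      have s2 : sf Bs (j0p+1+k+t+1) = sf Bs (j0p+1+t+1) + l := s2'
      have e1 := sf_succ Bs (j0p+1+t)
      have e2 := sf_succ Bs (j0p+1+k+t)
      have hlen1 : (blkf Bs (j0p+1+t)).length = (blkf Bs (j0p+1+k+t)).length := by omega
      apply list_eq_of_getD hlen1
      intro i hi
      have f1 := hFb (j0p+1+t) i hi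
      have f2 := hFb (j0p+1+k+t) i (by omega)
      have hb1 : sf Bs (j0p+1) ≤ sf Bs (j0p+1+t) := hmono.monotone (by omega)
      have hb2 : sf Bs (j0p+1+t+1) ≤ sf Bs j1 := hmono.monotone (by omega)
      have hr : sf Bs (j0p+1+t) + i < P + l := by omega
      have hsqi := hsq (sf Bs (j0p+1+t) + i - P) (by omega)
      rw [show P + (sf Bs (j0p+1+t) + i - P) = sf Bs (j0p+1+t) + i by omega,
        show P + l + (sf Bs (j0p+1+t) + i - P) = sf Bs (j0p+1+t) + i + l by omega] at hsqi
      rw [← f1, ← f2, hsqi]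
      congr 1
      omega
    have hleteq : ∀ t, t + 1 < k → lt (j0p+1+t) = lt (j0p+1+k+t) :=
      fun t ht => hdeceq _ _ (hblkeq t ht)
    have hs0 : sf Bs (j0p+1+k) = sf Bs (j0p+1) + l := hsync 0 (by omega)
    have hskk' : sf Bs (j0p+1+k+k') = sf Bs (j0p+1+k') + l := hsync k' (by omega)
    have hidx1 : sf Bs (j0p+1+k'+1) = sf Bs (j0p+1+k) := by
      rw [show j0p+1+k'+1 = j0p+1+k by omega]
    have hnext : P + 2*l ≤ sf Bs (j0p+1+k+k'+1) := by
      by_contra h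
      push_neg at h
      have hgtq : sf Bs (j0p+1+k+k') < sf Bs (j0p+1+k+k'+1) := hmono (by omega)
      have hq : FW Bs.flatten (sf Bs (j0p+1+k+k'+1)) = mV := sf_m hn hblk _
      have hq1 : P + l ≤ sf Bs (j0p+1+k+k'+1) := by omega
      have hnoM := noM _ hq1 (by omega)
      rw [hnoM] at hq
      have hbet := between hn hblk (j := j0p+1+k')
        (q := sf Bs (j0p+1+k+k'+1) - l) (by omega) (by omega)
      exact hbet hq
    have hup8 : sf Bs (j0p+1+k+k'+1) ≤ sf Bs (j0p+1+k+k') + 8 := by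
      have h3 := sf_succ Bs (j0p+1+k+k')
      have h4 := blk_len8 hblk (j0p+1+k+k')
      omega
    have hbj1 : sf Bs (j0p+1+k') + 6 ≤ sf Bs (j0p+1+k) := by
      have h3 := sf_succ Bs (j0p+1+k')
      have h4 := blk_len6 hblk (j0p+1+k')
      omega
    have h2kn : 2*k ≤ Bs.length := by
      by_contra h
      push_neg at h
      obtain ⟨c, hc⟩ : ∃ c, 2*k = Bs.length + 1 + c := ⟨2*k - (Bs.length+1), by omega⟩
      have hwrap : sf Bs (j0p+1+k+k'+1) = sf Bs (j0p+2+c) + Bs.flatten.length := by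
        rw [show j0p+1+k+k'+1 = (j0p+2+c) + Bs.length by omega]
        exact sf_period hn _
      have hmon6 : sf Bs (j0p+2) + 6*c ≤ sf Bs (j0p+2+c) := sf_lb hblk (j0p+2) c
      have h61 : sf Bs (j0p+1) + 6 ≤ sf Bs (j0p+2) := by
        have h3 : sf Bs (j0p+1+1) = sf Bs (j0p+1) + (blkf Bs (j0p+1)).length := sf_succ Bs (j0p+1)
        have h4 := blk_len6 hblk (j0p+1)
        have h5 : sf Bs (j0p+1+1) = sf Bs (j0p+2) := by rw [show j0p+1+1 = j0p+2 by omega]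
        omega
      omega
    -- letter case analysis
    by_cases hc1 : lt (j0p+1+k') = lt (j0p+1+k+k')
    · apply hwsq (j0p+1) k (by omega) (by omega)
      intro t ht
      rcases Nat.lt_or_ge t k' with h | h
      · exact hleteq t (by omega)
      · have h3 : t = k' := by omega
        subst h3
        exact hc1
    by_cases hc2 : lt j0p = lt (j0p+1+k')
    · apply hwsq j0p k (by omega) (by omega)
      intro t ht
      cases t with
      | zero =>
        rw [show j0p + 0 = j0p by omega, show j0p + k + 0 = j0p+1+k' by omega]
        exact hc2
      | succ t =>
        rw [show j0p + (t+1) = j0p+1+t by omega, show j0p+k+(t+1) = j0p+1+k+t by omega]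
        exact hleteq t (by omega)
    have hBlen : (blkf Bs (j0p+1+k')).length = d + e := by
      have h3 := sf_succ Bs (j0p+1+k')
      omega
    have hd2 : d ≤ 2 := by
      by_contra h
      push_neg at h
      have hsA : sf Bs j0p ≤ P := by
        by_contra hPA
        push_neg at hPA
        have hm' : FW Bs.flatten (sf Bs j0p) = mV := sf_m hn hblk j0p
        have hlt' : sf Bs j0p < sf Bs (j0p+1) := hmono (by omega)
        have h3 := hdmin (sf Bs j0p - P) (by omega)
        rw [show P + (sf Bs j0p - P) = sf Bs j0p by omega] at h3
        exact h3 hm'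
      have hlenA : sf Bs (j0p+1) = sf Bs j0p + (blkf Bs j0p).length := sf_succ Bs j0p
      have hsuf : ∀ t < 3, (blkf Bs j0p).getD ((blkf Bs j0p).length - 3 + t) mV
          = (blkf Bs (j0p+1+k')).getD ((blkf Bs (j0p+1+k')).length - 3 + t) mV := by
        intro t ht
        have hA3 : 3 ≤ (blkf Bs j0p).length := by omega
        have f1 := hFb j0p ((blkf Bs j0p).length - 3 + t) (by omega)
        have f2 := hFb (j0p+1+k') ((blkf Bs (j0p+1+k')).length - 3 + t) (by omega)
        have hsqt := hsq (d - 3 + t) (by omega)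
        rw [show sf Bs j0p + ((blkf Bs j0p).length - 3 + t) = P + (d - 3 + t) by omega] at f1
        rw [show sf Bs (j0p+1+k') + ((blkf Bs (j0p+1+k')).length - 3 + t)
            = P + l + (d - 3 + t) by omega] at f2
        rw [← f1, ← f2]
        exact hsqt
      rcases blocks_suf3 _ (hblk j0p) _ (hblk (j0p+1+k')) hsuf with hAB | ⟨hA, hB⟩ | ⟨hA, hB⟩
      · exact hc2 (hdeceq _ _ hAB)
      all_goals (
        apply hc2
        have e1 : lt j0p = 2 := hsub_decode (hblkh j0p)
          (by rw [hA]; first | exact mem_hsub2.2 (Or.inl rfl) | exact mem_hsub2.2 (Or.inr rfl))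
        have e2 : lt (j0p+1+k') = 2 := hsub_decode (hblkh _)
          (by rw [hB]; first | exact mem_hsub2.2 (Or.inl rfl) | exact mem_hsub2.2 (Or.inr rfl))
        rw [e1, e2])
    have he3 : e ≤ 3 := by
      by_contra h
      push_neg at h
      have hpre : ∀ t < 4, (blkf Bs (j0p+1+k')).getD t mV
          = (blkf Bs (j0p+1+k+k')).getD t mV := by
        intro t ht
        have h6B := blk_len6 hblk (j0p+1+k')
        have h6C := blk_len6 hblk (j0p+1+k+k')
        have f1 := hFb (j0p+1+k') t (by omega)
        have f2 := hFb (j0p+1+k+k') t (by omega)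
        have hsqt := hsq (l - e + t) (by omega)
        rw [show sf Bs (j0p+1+k') + t = P + (l - e + t) by omega] at f1
        rw [show sf Bs (j0p+1+k+k') + t = P + l + (l - e + t) by omega] at f2
        rw [← f1, ← f2]
        exact hsqt
      rcases blocks_pref4 _ (hblk (j0p+1+k')) _ (hblk (j0p+1+k+k')) hpre with
        hAB | ⟨hA, hB⟩ | ⟨hA, hB⟩
      · exact hc1 (hdeceq _ _ hAB)
      all_goals (
        apply hc1
        have e1 : lt (j0p+1+k') = 2 := hsub_decode (hblkh _)
          (by rw [hA]; first | exact mem_hsub2.2 (Or.inl rfl) | exact mem_hsub2.2 (Or.inr rfl))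
        have e2 : lt (j0p+1+k+k') = 2 := hsub_decode (hblkh _)
          (by rw [hB]; first | exact mem_hsub2.2 (Or.inl rfl) | exact mem_hsub2.2 (Or.inr rfl))
        rw [e1, e2])
    have h6B := blk_len6 hblk (j0p+1+k')
    omega

lemma blocks_headapp : ∀ A ∈ blocks4, ∀ X : List V, (A ++ X).head? = some mV := by
  intro A hA X
  simp only [blocks4, List.mem_cons, List.not_mem_nil, or_false] at hA
  rcases hA with rfl|rfl|rfl|rfl <;> rfl

lemma infix_getD {u y : List V} (h : y <:+: u) :
    ∃ p, p + y.length ≤ u.length ∧ ∀ t < y.length, u.getD (p + t) mV = y.getD t mV := by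
  obtain ⟨a, b, rfl⟩ := h
  refine ⟨a.length, by simp only [List.length_append]; omega, ?_⟩
  intro t ht
  rw [List.append_assoc, List.getD_append_right _ _ _ _ (Nat.le_add_right _ _),
    Nat.add_sub_cancel_left, List.getD_append _ _ _ _ ht]

lemma chain_join : ∀ {w : List (Fin 3)} {Bs : List (List V)},
    List.Forall₂ (fun a A => A ∈ hsub a) w Bs →
    Bs.flatten = [] ∨ (Bs.flatten.head? = some mV ∧ List.Chain' Arc (Bs.flatten ++ [mV])) := by
  intro w Bs hf
  induction hf with
  | nil => left; rfl
  | @cons a A w' Bs' ha hf ih =>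
    right
    have hA := hsub_cases ha
    have hAchain := blocks_chain _ hA
    have hAne : A ≠ [] := by
      intro h
      rw [h] at hA
      revert hA
      decide
    have hjc : (A :: Bs').flatten = A ++ Bs'.flatten := rfl
    rcases ih with h0 | ⟨hh, hc⟩
    · rw [hjc, h0, List.append_nil]
      refine ⟨?_, hAchain⟩
      have := blocks_headapp A hA []
      rwa [List.append_nil] at this
    · refine ⟨by rw [hjc]; exact blocks_headapp A hA _, ?_⟩
      rw [hjc, List.append_assoc]
      rcases List.isChain_append.1 hAchain with ⟨c1, -, c3⟩
      apply List.isChain_append.2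
      refine ⟨c1, hc, ?_⟩
      intro xx hxx y hy
      have hjne : Bs'.flatten ≠ [] := by
        intro h; rw [h] at hh; simp at hh
      rw [List.head?_append_of_ne_nil _ hjne, hh] at hy
      have hy' : y = mV := by simpa using hy.symm
      subst hy'
      exact c3 xx hxx mV (by simp)


end Aux

/-- Lemma 11: if `⟨w⟩` is a square-free circular word of length at least `2` over `{0,1,2}`
and `W ∈ h(w)`, then the circular word `⟨W⟩` is square-free and walkable in `D`. -/
theorem h_circular_squarefree_walkable (w : List (Fin 3)) (hw : 2 ≤ w.length)
    (hsf : CircSquareFree w) (W : List V) (hW : W ∈ SubstSet hsub w) :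
    CircSquareFree W ∧ CircWalkable W := by
  obtain ⟨Bs, hf, rfl⟩ := substset_forall2 hW
  have hlen : w.length = Bs.length := hf.length_eq
  have hn : 0 < Bs.length := by omega
  constructor
  · -- square-free
    intro u hu x hx hinf
    have hul : u.length = Bs.flatten.length := hu.perm.length_eq
    obtain ⟨r, hr⟩ := hu.symm
    obtain ⟨p, hple, hpt⟩ := infix_getD hinf
    have hxl : 0 < x.length := List.length_pos_iff.2 hx
    have hxxl : (x ++ x).length = 2 * x.length := by simp; omega
    have h2x : 2 * x.length ≤ Bs.flatten.length := by omega
    have hLpos : 0 < Bs.flatten.length := by omega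
    have harg : ∀ i : ℕ,
        (Bs.flatten.length + r + i) % Bs.flatten.length = (i + r) % Bs.flatten.length := by
      intro i
      rw [Nat.add_assoc, Nat.add_mod_left, Nat.add_comm]
    have hFWu : ∀ i, i < u.length → FW Bs.flatten (Bs.flatten.length + r + i) = u.getD i mV := by
      intro i hi
      have hi' : i < (Bs.flatten.rotate r).length := by rw [hr]; exact hi
      show Bs.flatten.getD ((Bs.flatten.length + r + i) % Bs.flatten.length) mV = u.getD i mV
      rw [harg i, List.getD_eq_getElem _ _ (Nat.mod_lt _ hLpos),
        ← List.getElem_rotate _ _ _ hi', ← List.getD_eq_getElem _ mV hi', hr]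
    apply master w hw hsf Bs hf (Bs.flatten.length + r + p) x.length hxl h2x (by omega)
    intro t ht
    have e1 := hFWu (p + t) (by omega)
    have e2 := hFWu (p + x.length + t) (by omega)
    have e1' : FW Bs.flatten (Bs.flatten.length + r + p + t) = u.getD (p + t) mV := by
      rw [show Bs.flatten.length + r + p + t = Bs.flatten.length + r + (p + t) by omega]
      exact e1
    have e2' : FW Bs.flatten (Bs.flatten.length + r + p + x.length + t)
        = u.getD (p + x.length + t) mV := by
      rw [show Bs.flatten.length + r + p + x.length + t
          = Bs.flatten.length + r + (p + x.length + t) by omega]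
      exact e2
    rw [e1', e2']
    have g1 := hpt t (by omega)
    have g2 := hpt (x.length + t) (by omega)
    rw [show p + (x.length + t) = p + x.length + t by omega] at g2
    rw [g1, g2, List.getD_append _ _ _ _ ht,
      List.getD_append_right _ _ _ _ (Nat.le_add_right _ _), Nat.add_sub_cancel_left]
  · -- walkable
    intro u hu
    rcases chain_join hf with h0 | ⟨hh, hc⟩
    · rw [h0] at hu
      rw [List.isRotated_nil_iff] at hu
      subst hu
      exact List.isChain_nil
    · have hch2 : List.Chain' Arc (Bs.flatten ++ Bs.flatten) := by
        rcases List.isChain_append.1 hc with ⟨c1, -, c3⟩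
        apply List.isChain_append.2
        refine ⟨c1, c1, ?_⟩
        intro xx hxx y hy
        rw [hh] at hy
        have hy' : y = mV := by simpa using hy.symm
        subst hy'
        exact c3 xx hxx mV (by simp)
      obtain ⟨r, hr⟩ := hu.symm
      have hinf : u <:+: Bs.flatten ++ Bs.flatten := by
        rw [← hr, ← List.rotate_mod]
        have hne : Bs.flatten ≠ [] := by
          intro hnil
          rw [hnil] at hh
          simp at hh
        have hrl : r % Bs.flatten.length ≤ Bs.flatten.length :=
          le_of_lt (Nat.mod_lt _ (List.length_pos_iff.2 hne))
        rw [List.rotate_eq_drop_append_take hrl]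
        refine ⟨Bs.flatten.take (r % Bs.flatten.length), Bs.flatten.drop (r % Bs.flatten.length), ?_⟩
        simp only [List.append_assoc, List.take_append_drop]
        rw [← List.append_assoc, List.take_append_drop]
      exact hch2.infix hinf
end

section
/- For every even positive integer n, there is a square-free circular word of length n over the vertex set of the digraph D that is walkable in D. -/
namespace Lemma12
open List

variable {β : Type*} {A : Type*}

theorem squareFree_of_infix {w u : List β} (h : SquareFree w) (hu : u <:+: w) :
    SquareFree u := fun x hx hxx => h x hx (hxx.trans hu)

theorem take_drop_infix (w : List β) (i L : ℕ) : (w.drop i).take L <:+: w :=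
  ((take_prefix L (w.drop i)).isInfix).trans ((drop_suffix i w).isInfix)

theorem window_eq {u v : List β} (r m : ℕ) (h : r + m ≤ u.length) :
    ((u ++ v).drop r).take m = (u.drop r).take m := by
  rw [drop_append_of_le_length (by omega), take_append_of_le_length (by simp; omega)]

theorem exists_square_iff {w : List β} :
    (∃ x : List β, x ≠ [] ∧ (x ++ x) <:+: w) ↔
    ∃ L i, 0 < L ∧ i + 2*L ≤ w.length ∧ (w.drop i).take L = (w.drop (i+L)).take L := by
  constructor
  · rintro ⟨x, hx, s, t, hw⟩
    have hxl : 0 < x.length := length_pos_iff.mpr hx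
    refine ⟨x.length, s.length, hxl, ?_, ?_⟩
    · have := congrArg List.length hw
      simp [length_append] at this
      omega
    · have h1 : w.drop s.length = x ++ (x ++ t) := by
        rw [← hw, append_assoc, append_assoc, drop_left]
      have h2 : w.drop (s.length + x.length) = x ++ t := by
        have : w = (s ++ x) ++ (x ++ t) := by rw [← hw]; simp [append_assoc]
        rw [this, ← @length_append _ s x, drop_left]
      rw [h1, h2, take_left' rfl, take_left' rfl]
  · rintro ⟨L, i, hL, hle, heq⟩
    refine ⟨(w.drop i).take L, ?_, ?_⟩
    · have : ((w.drop i).take L).length = L := by simp [length_take, length_drop]; omega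
      intro h; rw [h] at this; simp at this; omega
    · refine ⟨w.take i, w.drop (i + 2*L), ?_⟩
      have key : (w.drop i).take (2*L) = (w.drop i).take L ++ (w.drop (i+L)).take L := by
        rw [two_mul, take_add, drop_drop]
      calc w.take i ++ ((w.drop i).take L ++ (w.drop i).take L) ++ w.drop (i + 2*L)
          = w.take i ++ ((w.drop i).take L ++ (w.drop (i+L)).take L) ++ w.drop (i + 2*L) := by
            rw [← heq]
        _ = w.take i ++ ((w.drop i).take (2*L) ++ ((w.drop i).drop (2*L))) := by
            rw [key, drop_drop]
            simp [append_assoc]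
        _ = w := by rw [take_append_drop, take_append_drop]
  
theorem not_squareFree_of_eq {w : List β} {i L : ℕ} (hL : 0 < L) (hle : i + 2*L ≤ w.length)
    (heq : (w.drop i).take L = (w.drop (i+L)).take L) : ¬ SquareFree w := by
  intro hsf
  obtain ⟨x, hx, hxx⟩ := exists_square_iff.mpr ⟨L, i, hL, hle, heq⟩
  exact hsf x hx hxx

def sfCheck [DecidableEq β] (w : List β) : Prop :=
  ∀ L, L < w.length → ∀ i, i < w.length → 0 < L → i + 2*L ≤ w.length →
    (w.drop i).take L ≠ (w.drop (i+L)).take L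

instance [DecidableEq β] (w : List β) : Decidable (sfCheck w) := by
  unfold sfCheck; infer_instance

theorem squareFree_iff_sfCheck [DecidableEq β] (w : List β) : SquareFree w ↔ sfCheck w := by
  constructor
  · intro h L hL i hi hL0 hle heq
    exact not_squareFree_of_eq hL0 hle heq h
  · intro h x hx hxx
    obtain ⟨L, i, hL, hle, heq⟩ := exists_square_iff.mp ⟨x, hx, hxx⟩
    exact h L (by omega) i (by omega) hL hle heq

end Lemma12

namespace Lemma12
open List
variable {β : Type*}

/-! ### a fast boolean square checker (soundness direction only) -/

def takeEqB [DecidableEq β] : ℕ → List β → List β → Bool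
  | 0, _, _ => true
  | _+1, [], [] => true
  | _+1, [], _ :: _ => false
  | _+1, _ :: _, [] => false
  | L+1, a :: u, b :: v => decide (a = b) && takeEqB L u v

lemma takeEqB_eq [DecidableEq β] : ∀ (L : ℕ) (u v : List β),
    (takeEqB L u v = true) ↔ u.take L = v.take L := by
  intro L
  induction L with
  | zero => intro u v; simp [takeEqB]
  | succ L ih =>
    intro u v
    cases u <;> cases v <;> simp [takeEqB, ih]

def goSq [DecidableEq β] (s : List β) : ℕ → ℕ → List β → Bool
  | 0, _, _ => false
  | fuel+1, L, s2 => takeEqB L s s2 || goSq s fuel (L+1) (s2.drop 1)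

def noSqB [DecidableEq β] : List β → Bool
  | [] => true
  | a :: t => !(goSq (a :: t) ((a :: t).length / 2) 1 t) && noSqB t

lemma goSq_sound [DecidableEq β] (s : List β) : ∀ fuel L,
    goSq s fuel L (s.drop L) = false →
    ∀ L', L ≤ L' → L' < L + fuel → s.take L' ≠ (s.drop L').take L' := by
  intro fuel
  induction fuel with
  | zero => intro L h L' h1 h2; omega
  | succ fuel ih =>
    intro L h L' h1 h2
    rw [goSq, Bool.or_eq_false_iff] at h
    obtain ⟨h3, h4⟩ := h
    rcases eq_or_lt_of_le h1 with rfl | hlt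
    · intro hc
      rw [← takeEqB_eq] at hc
      rw [hc] at h3
      simp at h3
    · have h5 : (s.drop L).drop 1 = s.drop (L+1) := by rw [drop_drop]
      rw [h5] at h4
      exact ih (L+1) h4 L' (by omega) (by omega)

lemma noSqB_drop [DecidableEq β] : ∀ (w : List β), noSqB w = true → ∀ i, noSqB (w.drop i) = true := by
  intro w hw i
  induction i generalizing w with
  | zero => simpa using hw
  | succ i ih =>
    cases w with
    | nil => simpa using hw
    | cons a t =>
      rw [drop_succ_cons]
      rw [noSqB, Bool.and_eq_true] at hw
      exact ih t hw.2

lemma noSqB_sound [DecidableEq β] : ∀ w : List β, noSqB w = true → SquareFree w := by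
  intro w hw x hx hxx
  obtain ⟨L, i, hL, hle, heq⟩ := exists_square_iff.mp ⟨x, hx, hxx⟩
  have hsuf : noSqB (w.drop i) = true := noSqB_drop w hw i
  set s := w.drop i with hs
  have hslen : s.length = w.length - i := by rw [hs, length_drop]
  have hsne : s ≠ [] := by
    intro h
    rw [h] at hslen
    simp at hslen
    omega
  obtain ⟨a, t, hat⟩ := exists_cons_of_ne_nil hsne
  have hgo : goSq s (s.length / 2) 1 (s.drop 1) = false := by
    rw [hat] at hsuf ⊢
    rw [noSqB, Bool.and_eq_true] at hsuf
    have := hsuf.1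
    simpa using this
  have hrange : L < 1 + s.length / 2 := by omega
  refine goSq_sound s (s.length / 2) 1 hgo L (by omega) hrange ?_
  rw [heq, hs, drop_drop]

end Lemma12

namespace Lemma12
open List

variable {β : Type*} {A : Type*}

theorem getElem_congr' {γ : Type*} {l l' : List γ} (h : l = l') {i j : ℕ} (hij : i = j)
    {hi : i < l.length} : l[i]'hi = l'[j]'(by rw [← h, ← hij]; exact hi) := by
  subst h; subst hij; rfl

section Morphism

variable (E : A → List β) (q : ℕ)

theorem flatMap_length (hlen : ∀ c, (E c).length = q) (w : List A) :
    (w.flatMap E).length = q * w.length := by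
  induction w with
  | nil => simp
  | cons c w ih => simp [flatMap_cons, length_append, hlen, ih]; ring

theorem flatMap_drop (hlen : ∀ c, (E c).length = q) (w : List A) (i : ℕ) :
    (w.flatMap E).drop (q * i) = (w.drop i).flatMap E := by
  induction i generalizing w with
  | zero => simp
  | succ i ih =>
    cases w with
    | nil => simp
    | cons c w =>
      rw [flatMap_cons, show q * (i+1) = q + q * i by ring, ← drop_drop,
        ← hlen c, drop_left, hlen c, ih, drop_succ_cons]

theorem flatMap_take (hlen : ∀ c, (E c).length = q) (w : List A) (i : ℕ) :
    (w.flatMap E).take (q * i) = (w.take i).flatMap E := by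
  induction i generalizing w with
  | zero => simp
  | succ i ih =>
    cases w with
    | nil => simp
    | cons c w =>
      rw [flatMap_cons, show q * (i+1) = q + q * i by ring, take_add,
        ← hlen c, take_left, hlen c, drop_left' (hlen c), ih, take_succ_cons, flatMap_cons]

theorem flatMap_getElem (hlen : ∀ c, (E c).length = q) (w : List A) (i u : ℕ)
    (hi : i < w.length) (hu : u < q) (h : q*i+u < (w.flatMap E).length) :
    (w.flatMap E)[q*i+u] = (E (w[i]'hi))[u]'(by rw [hlen]; exact hu) := by
  have hlen2 : (w.flatMap E).length = q * w.length := flatMap_length E q hlen w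
  have h1 : (w.flatMap E).drop (q*i) = E (w[i]'hi) ++ (w.drop (i+1)).flatMap E := by
    rw [flatMap_drop E q hlen, drop_eq_getElem_cons hi, flatMap_cons]
  have h2 : u < ((w.flatMap E).drop (q*i)).length := by
    rw [length_drop]; omega
  have h3 : (w.flatMap E)[q*i+u] = ((w.flatMap E).drop (q*i))[u]'h2 := by
    rw [getElem_drop]
  have h4 : u < (E (w[i]'hi)).length := by rw [hlen]; exact hu
  rw [h3]
  simp only [h1]
  exact getElem_append_left h4

theorem flatMap_chain' {R : β → β → Prop} (hq : 0 < q) (hlen : ∀ c, (E c).length = q)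
    (hch : ∀ c, Chain' R (E c))
    (hjun : ∀ c c' : A, ∀ x ∈ (E c).getLast?, ∀ y ∈ (E c').head?, R x y)
    (w : List A) : Chain' R (w.flatMap E) := by
  induction w with
  | nil => exact IsChain.nil
  | cons c w ih =>
    simp only [Chain']; rw [flatMap_cons, isChain_append]
    refine ⟨hch c, ih, ?_⟩
    intro x hx y hy
    cases w with
    | nil => simp at hy
    | cons c' w' =>
      rw [flatMap_cons] at hy
      have hne : E c' ≠ [] := by
        intro h; have := hlen c'; rw [h] at this; simp at this; omega
      rw [head?_append_of_ne_nil _ hne] at hy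
      exact hjun c c' x hx y hy

theorem squareFree_flatMap [DecidableEq β]
    (M : List β) (nB : ℕ)
    (hq : 2 ≤ q)
    (hM0 : 0 < M.length) (hMq : M.length ≤ q)
    (hlen : ∀ c, (E c).length = q)
    (hMpre : ∀ c, M <+: E c)
    (hMocc : ∀ a b : A, ∀ o : ℕ, o + M.length ≤ 2*q →
       ((E a ++ E b).drop o).take M.length = M → o = 0 ∨ o = q)
    (hinj : ∀ a b : A, E a = E b → a = b)
    (hH2 : ∀ a b c : A, ∀ T : ℕ, 0 < T → T < q → (E a).drop T = (E b).drop T →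
        (E b).take T = (E c).take T → a = b ∨ b = c)
    (hnB : q - 1 + 2*(q + M.length - 1) ≤ nB * q)
    (hshort : ∀ x : List A, SquareFree x → x.length ≤ nB → SquareFree (x.flatMap E))
    (w : List A) (hw : SquareFree w) : SquareFree (w.flatMap E) := by
  intro x hx hxx
  set Ew := w.flatMap E with hEw
  have hlenEw : Ew.length = q * w.length := flatMap_length E q hlen w
  obtain ⟨s, t, hst⟩ := hxx
  set p := s.length with hp
  set L := x.length with hL
  have hLpos : 0 < L := length_pos_iff.mpr hx
  have htot : p + 2*L + t.length = Ew.length := by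
    have := congrArg List.length hst
    simp [length_append] at this
    omega
  have e1 : Ew.drop p = x ++ (x ++ t) := by
    rw [← hst, append_assoc, append_assoc, drop_left]
  have e2 : Ew.drop (p + L) = x ++ t := by
    have h' : Ew = (s ++ x) ++ (x ++ t) := by rw [← hst]; simp [append_assoc]
    rw [h', show p + L = (s ++ x).length by simp [hp, hL], drop_left]
  -- the fundamental period fact
  have F : ∀ j : ℕ, j < L → ∀ (h1 : p + j < Ew.length) (h2 : p + L + j < Ew.length),
      Ew[p+j] = Ew[p+L+j] := by
    intro j hj h1 h2
    have g1 : Ew[p+j] = (Ew.drop p)[j]'(by rw [length_drop]; omega) := by rw [getElem_drop]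
    have g2 : Ew[p+L+j] = (Ew.drop (p+L))[j]'(by rw [length_drop]; omega) := by
      rw [getElem_drop]
    rw [g1, g2]
    simp only [e1, e2]
    rw [getElem_append_left (by omega : j < x.length),
      getElem_append_left (by omega : j < x.length)]
  -- getElem of blocks
  have hEg : ∀ i u : ℕ, ∀ (hi : i < w.length) (hu : u < q) (h : q*i+u < Ew.length),
      Ew[q*i+u] = (E (w[i]'hi))[u]'(by rw [hlen]; exact hu) :=
    fun i u hi hu h => flatMap_getElem E q hlen w i u hi hu h
  have hblkdec : ∀ i : ℕ, ∀ (hi : i < w.length),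
      Ew.drop (q*i) = E (w[i]'hi) ++ (w.drop (i+1)).flatMap E := by
    intro i hi
    rw [hEw, flatMap_drop E q hlen, drop_eq_getElem_cons hi, flatMap_cons]
  by_cases hcase : L < q + M.length
  · -- short case : the square lives in at most nB blocks
    set i0 := p / q with hi0
    set r0 := p % q with hr0
    have hpi0 : q * i0 + r0 = p := Nat.div_add_mod p q
    have hr0q : r0 < q := Nat.mod_lt _ (by omega)
    have hx2 : (Ew.drop p).take (2*L) = x ++ x := by
      rw [e1, two_mul, take_add, take_left' rfl, drop_left' rfl, take_left' rfl]
    have hEwdd : Ew.drop p = (Ew.drop (q*i0)).drop r0 := by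
      rw [drop_drop]; congr 1; omega
    have hsplit : (Ew.drop (q*i0)).take (r0 + 2*L) =
        (Ew.drop (q*i0)).take r0 ++ (x ++ x) := by
      rw [take_add, ← hEwdd, hx2]
    have hbound2 : r0 + 2*L ≤ nB*q := by omega
    have hsub1 : x ++ x <:+: (Ew.drop (q*i0)).take (nB*q) := by
      have h2 : x ++ x <:+: (Ew.drop (q*i0)).take (r0 + 2*L) := by
        exact ⟨(Ew.drop (q*i0)).take r0, [], by simp [hsplit]⟩
      refine h2.trans ?_
      have h3 : (Ew.drop (q*i0)).take (r0+2*L) = ((Ew.drop (q*i0)).take (nB*q)).take (r0+2*L) := by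
        rw [take_take]
        congr 1
        omega
      rw [h3]
      exact (take_prefix _ _).isInfix
    have hEq3 : (Ew.drop (q*i0)).take (nB*q) = ((w.drop i0).take nB).flatMap E := by
      rw [hEw, flatMap_drop E q hlen, show nB*q = q*nB by ring, flatMap_take E q hlen]
    have hx0sf : SquareFree ((w.drop i0).take nB) :=
      squareFree_of_infix hw (take_drop_infix w i0 nB)
    have hx0len : ((w.drop i0).take nB).length ≤ nB := by
      rw [length_take]; omega
    exact hshort _ hx0sf hx0len x hx (by rw [← hEq3]; exact hsub1)
  · -- long case : the square is block aligned
    push_neg at hcase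
    have hMwin : ∀ c : A, (E c).take M.length = M :=
      fun c => (prefix_iff_eq_take.mp (hMpre c)).symm
    -- all occurrences of M in Ew are at block boundaries
    have hMpos : ∀ o : ℕ, o + M.length ≤ Ew.length → (Ew.drop o).take M.length = M → q ∣ o := by
      intro o hoB hocc
      set i2 := o / q with hi2
      set r2 := o % q with hr2
      have h2 : q * i2 + r2 = o := Nat.div_add_mod o q
      have hr2q : r2 < q := Nat.mod_lt _ (by omega)
      have hi2w : i2 < w.length := by
        have h3 : q * i2 < q * w.length := by omega
        exact Nat.lt_of_mul_lt_mul_left h3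
      have hoEw : Ew.drop o = (Ew.drop (q*i2)).drop r2 := by
        rw [drop_drop]; congr 1; omega
      by_cases hi21 : i2 + 1 < w.length
      · have hblk : Ew.drop (q*i2) =
            (E (w[i2]'hi2w) ++ E (w[i2+1]'hi21)) ++ (w.drop (i2+2)).flatMap E := by
          rw [hblkdec i2 hi2w]
          have h5 : (w.drop (i2+1)).flatMap E = E (w[i2+1]'hi21) ++ (w.drop (i2+2)).flatMap E := by
            rw [drop_eq_getElem_cons hi21, flatMap_cons]
          rw [h5, append_assoc]
        have hocc2 : ((E (w[i2]'hi2w) ++ E (w[i2+1]'hi21)).drop r2).take M.length = M := by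
          rw [← window_eq (v := (w.drop (i2+2)).flatMap E) r2 M.length
            (by simp [length_append, hlen]; omega), ← hblk, ← hoEw]
          exact hocc
        rcases hMocc _ _ r2 (by omega) hocc2 with h | h
        · exact ⟨i2, by omega⟩
        · omega
      · have hi2e : i2 + 1 = w.length := by omega
        have hr2M : r2 + M.length ≤ q := by
          have h4 : Ew.length = q * i2 + q := by
            rw [hlenEw, ← hi2e]; ring
          omega
        have hocc3 : ((E (w[i2]'hi2w)).drop r2).take M.length = M := by
          have hdrop1 : w.drop (i2+1) = [] := by
            apply eq_nil_of_length_eq_zero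
            rw [length_drop]; omega
          have hblk : Ew.drop (q*i2) = E (w[i2]'hi2w) ++ ([] : List β) := by
            rw [hblkdec i2 hi2w, hdrop1]; simp
          rw [← window_eq (v := ([] : List β)) r2 M.length (by rw [hlen]; omega), ← hblk, ← hoEw]
          exact hocc
        have hocc2 : ((E (w[i2]'hi2w) ++ E (w[i2]'hi2w)).drop r2).take M.length = M := by
          rw [window_eq r2 M.length (by rw [hlen]; omega)]
          exact hocc3
        rcases hMocc _ _ r2 (by omega) hocc2 with h | h
        · exact ⟨i2, by omega⟩
        · omega
    -- a marker occurrence inside the first copy of x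
    set i1 := (p + q - 1) / q with hi1
    have hkey : q * i1 + (p + q - 1) % q = p + q - 1 := Nat.div_add_mod _ q
    have hmod : (p + q - 1) % q < q := Nat.mod_lt _ (by omega)
    have hpi1a : p ≤ q * i1 := by omega
    have hpi1b : q * i1 < p + q := by omega
    have hi1w : i1 < w.length := by
      have h3 : q * i1 < q * w.length := by omega
      exact Nat.lt_of_mul_lt_mul_left h3
    have hocc1 : (Ew.drop (q*i1)).take M.length = M := by
      rw [hblkdec i1 hi1w, take_append_of_le_length (by rw [hlen]; omega), hMwin]
    have hocc2 : (Ew.drop (q*i1 + L)).take M.length = M := by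
      apply ext_getElem
      · simp [length_take, length_drop]
        omega
      · intro u h1 h2
        have hu : u < M.length := by simpa using h2
        calc ((Ew.drop (q*i1+L)).take M.length)[u]'h1
            = (Ew.drop (q*i1+L))[u]'(by simp [length_drop]; omega) := getElem_take
          _ = Ew[q*i1+L+u]'(by omega) := getElem_drop
          _ = Ew[p+L+(q*i1-p+u)]'(by omega) := getElem_congr' rfl (by omega)
          _ = Ew[p+(q*i1-p+u)]'(by omega) := (F (q*i1-p+u) (by omega) (by omega) (by omega)).symm
          _ = Ew[q*i1+u]'(by omega) := getElem_congr' rfl (by omega)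
          _ = (Ew.drop (q*i1))[u]'(by simp [length_drop]; omega) := (getElem_drop).symm
          _ = ((Ew.drop (q*i1)).take M.length)[u]'(by simp [length_take, length_drop]; omega) :=
              (getElem_take).symm
          _ = M[u]'hu := getElem_congr' hocc1 rfl
    have hdvd : q ∣ L := by
      have hd1 : q ∣ q*i1 + L := hMpos _ (by omega) hocc2
      have hd2 : q ∣ q*i1 := ⟨i1, rfl⟩
      have := Nat.dvd_sub hd1 hd2
      simpa using this
    obtain ⟨tq, hLq⟩ := hdvd
    have htq : 0 < tq := by
      rcases Nat.eq_zero_or_pos tq with h | h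
      · rw [h, Nat.mul_zero] at hLq; omega
      · exact h
    set i := p / q with hidef
    set r := p % q with hrdef
    have hpir : q * i + r = p := Nat.div_add_mod p q
    have hrq : r < q := Nat.mod_lt _ (by omega)
    -- interior block equality
    have hInt : ∀ m : ℕ, p ≤ q * m → q * m + q ≤ p + L →
        ∃ (hm : m < w.length) (hmt : m + tq < w.length), w[m]'hm = w[m+tq]'hmt := by
      intro m h1 h2
      have hqmt : q * (m + tq) = q * m + L := by rw [hLq]; ring
      have hmw : m < w.length := by
        have h3 : q * m < q * w.length := by omega
        exact Nat.lt_of_mul_lt_mul_left h3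
      have hmtw : m + tq < w.length := by
        have h3 : q * (m + tq) < q * w.length := by omega
        exact Nat.lt_of_mul_lt_mul_left h3
      refine ⟨hmw, hmtw, ?_⟩
      apply hinj
      apply ext_getElem (by rw [hlen, hlen])
      intro u h1' h2'
      have hu : u < q := by rw [hlen] at h1'; exact h1'
      have e5 : (E (w[m]'hmw))[u]'h1' = Ew[q*m+u]'(by omega) := (hEg m u hmw hu (by omega)).symm
      have e6 : (E (w[m+tq]'hmtw))[u]'h2' = Ew[q*(m+tq)+u]'(by omega) :=
        (hEg (m+tq) u hmtw hu (by omega)).symm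
      rw [e5, e6]
      calc Ew[q*m+u]'(by omega)
          = Ew[p+(q*m+u-p)]'(by omega) := getElem_congr' rfl (by omega)
        _ = Ew[p+L+(q*m+u-p)]'(by omega) := F (q*m+u-p) (by omega) (by omega) (by omega)
        _ = Ew[q*(m+tq)+u]'(by omega) := getElem_congr' rfl (by omega)
    by_cases hr0 : r = 0
    · -- aligned square
      have hqit2 : q * (i + 2*tq) = q * i + 2*L := by rw [hLq]; ring
      have hb : i + 2*tq ≤ w.length := by
        have h3 : q * (i + 2*tq) ≤ q * w.length := by omega
        exact Nat.le_of_mul_le_mul_left h3 (by omega)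
      have hsq : (w.drop i).take tq = (w.drop (i+tq)).take tq := by
        apply ext_getElem
        · simp [length_take, length_drop]; omega
        · intro m hm1 hm2
          have hmtq : m < tq := by
            simp [length_take, length_drop] at hm1; omega
          have hqm : q * (i + m) = q*i + q*m := by ring
          have hqm2 : q * m + q ≤ L := by
            have h5 : q * (m+1) ≤ q * tq := Nat.mul_le_mul_left q (by omega)
            have h6 : q * (m+1) = q*m + q := by ring
            omega
          obtain ⟨hma, hmb, hmeq⟩ := hInt (i + m) (by omega) (by omega)
          calc ((w.drop i).take tq)[m]'hm1
              = (w.drop i)[m]'(by simp [length_drop]; omega) := getElem_take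
            _ = w[i+m]'(by omega) := getElem_drop
            _ = w[(i+m)+tq]'(by omega) := hmeq
            _ = w[(i+tq)+m]'(by omega) := getElem_congr' rfl (by omega)
            _ = (w.drop (i+tq))[m]'(by simp [length_drop]; omega) := (getElem_drop).symm
            _ = ((w.drop (i+tq)).take tq)[m]'hm2 := (getElem_take).symm
      exact not_squareFree_of_eq htq hb hsq hw
    · -- unaligned square
      have hrpos : 0 < r := Nat.pos_of_ne_zero hr0
      have hqit : q * (i + tq) = q * i + L := by rw [hLq]; ring
      have hqit2 : q * (i + 2*tq) = q * i + 2*L := by rw [hLq]; ring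
      have hiw : i < w.length := by
        have h3 : q * i < q * w.length := by omega
        exact Nat.lt_of_mul_lt_mul_left h3
      have hitw : i + tq < w.length := by
        have h3 : q * (i + tq) < q * w.length := by omega
        exact Nat.lt_of_mul_lt_mul_left h3
      have hit2w : i + 2*tq < w.length := by
        have h3 : q * (i + 2*tq) < q * w.length := by omega
        exact Nat.lt_of_mul_lt_mul_left h3
      have htail : (E (w[i]'hiw)).drop r = (E (w[i+tq]'hitw)).drop r := by
        apply ext_getElem (by simp [length_drop, hlen])
        intro u h1' h2'
        have hu : u < q - r := by simpa [length_drop, hlen] using h1'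
        calc ((E (w[i]'hiw)).drop r)[u]'h1'
            = (E (w[i]'hiw))[r+u]'(by rw [hlen]; omega) := getElem_drop
          _ = Ew[q*i+(r+u)]'(by omega) := (hEg i (r+u) hiw (by omega) (by omega)).symm
          _ = Ew[p+u]'(by omega) := getElem_congr' rfl (by omega)
          _ = Ew[p+L+u]'(by omega) := F u (by omega) (by omega) (by omega)
          _ = Ew[q*(i+tq)+(r+u)]'(by omega) := getElem_congr' rfl (by omega)
          _ = (E (w[i+tq]'hitw))[r+u]'(by rw [hlen]; omega) :=
              hEg (i+tq) (r+u) hitw (by omega) (by omega)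
          _ = ((E (w[i+tq]'hitw)).drop r)[u]'h2' := (getElem_drop).symm
      have hhead : (E (w[i+tq]'hitw)).take r = (E (w[i+2*tq]'hit2w)).take r := by
        apply ext_getElem (by simp [length_take, hlen])
        intro u h1' h2'
        have hu : u < r := by
          simp [length_take, hlen] at h1'; omega
        calc ((E (w[i+tq]'hitw)).take r)[u]'h1'
            = (E (w[i+tq]'hitw))[u]'(by rw [hlen]; omega) := getElem_take
          _ = Ew[q*(i+tq)+u]'(by omega) := (hEg (i+tq) u hitw (by omega) (by omega)).symm
          _ = Ew[p+(L-r+u)]'(by omega) := getElem_congr' rfl (by omega)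
          _ = Ew[p+L+(L-r+u)]'(by omega) := F (L-r+u) (by omega) (by omega) (by omega)
          _ = Ew[q*(i+2*tq)+u]'(by omega) := getElem_congr' rfl (by omega)
          _ = (E (w[i+2*tq]'hit2w))[u]'(by rw [hlen]; omega) :=
              hEg (i+2*tq) u hit2w (by omega) (by omega)
          _ = ((E (w[i+2*tq]'hit2w)).take r)[u]'h2' := (getElem_take).symm
      rcases hH2 _ _ _ r hrpos hrq htail hhead with hab | hbc
      · -- square of w at position i
        have hsq : (w.drop i).take tq = (w.drop (i+tq)).take tq := by
          apply ext_getElem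
          · simp [length_take, length_drop]; omega
          · intro m hm1 hm2
            have hmtq : m < tq := by
              simp [length_take, length_drop] at hm1; omega
            have key : ∀ (hma : i + m < w.length) (hmb : i + m + tq < w.length),
                w[i+m]'hma = w[i+m+tq]'hmb := by
              intro hma hmb
              rcases Nat.eq_zero_or_pos m with hm0 | hm0
              · calc w[i+m]'hma = w[i]'hiw := getElem_congr' rfl (by omega)
                  _ = w[i+tq]'hitw := hab
                  _ = w[i+m+tq]'hmb := getElem_congr' rfl (by omega)
              · have hqm : q * (i + m) = q*i + q*m := by ring
                have h7 : q*1 ≤ q*m := Nat.mul_le_mul_left q hm0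
                have h8 : q*1 = q := by ring
                have hqm2 : q * m + q ≤ r + L := by
                  have h5 : q * (m+1) ≤ q * tq := Nat.mul_le_mul_left q (by omega)
                  have h6 : q * (m+1) = q*m + q := by ring
                  omega
                obtain ⟨hma', hmb', hmeq⟩ := hInt (i + m) (by omega) (by omega)
                calc w[i+m]'hma = w[(i+m)+tq]'hmb' := hmeq
                  _ = w[i+m+tq]'hmb := getElem_congr' rfl (by omega)
            calc ((w.drop i).take tq)[m]'hm1
                = (w.drop i)[m]'(by simp [length_drop]; omega) := getElem_take
              _ = w[i+m]'(by omega) := getElem_drop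
              _ = w[i+m+tq]'(by omega) := key _ _
              _ = w[(i+tq)+m]'(by omega) := getElem_congr' rfl (by omega)
              _ = (w.drop (i+tq))[m]'(by simp [length_drop]; omega) := (getElem_drop).symm
              _ = ((w.drop (i+tq)).take tq)[m]'hm2 := (getElem_take).symm
        exact not_squareFree_of_eq htq (by omega) hsq hw
      · -- square of w at position i+1
        have hsq : (w.drop (i+1)).take tq = (w.drop ((i+1)+tq)).take tq := by
          apply ext_getElem
          · simp [length_take, length_drop]; omega
          · intro m hm1 hm2
            have hmtq : m < tq := by
              simp [length_take, length_drop] at hm1; omega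
            have key : ∀ (hma : i+1+m < w.length) (hmb : i+1+m + tq < w.length),
                w[i+1+m]'hma = w[i+1+m+tq]'hmb := by
              intro hma hmb
              rcases Nat.lt_or_ge (m+1) tq with hm0 | hm0
              · have hqm : q * (i + 1 + m) = q*i + q*(m+1) := by ring
                have h7 : q*1 ≤ q*(m+1) := Nat.mul_le_mul_left q (by omega)
                have h8 : q*1 = q := by ring
                have hqm2 : q * (m+1) + q ≤ L := by
                  have h5 : q * (m+2) ≤ q * tq := Nat.mul_le_mul_left q (by omega)
                  have h6 : q * (m+2) = q*(m+1) + q := by ring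
                  omega
                obtain ⟨hma', hmb', hmeq⟩ := hInt (i + 1 + m) (by omega) (by omega)
                calc w[i+1+m]'hma = w[(i+1+m)+tq]'hmb' := hmeq
                  _ = w[i+1+m+tq]'hmb := getElem_congr' rfl (by omega)
              · have hmeq : m + 1 = tq := by omega
                calc w[i+1+m]'hma = w[i+tq]'hitw := getElem_congr' rfl (by omega)
                  _ = w[i+2*tq]'hit2w := hbc
                  _ = w[i+1+m+tq]'hmb := getElem_congr' rfl (by omega)
            calc ((w.drop (i+1)).take tq)[m]'hm1
                = (w.drop (i+1))[m]'(by simp [length_drop]; omega) := getElem_take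
              _ = w[i+1+m]'(by omega) := getElem_drop
              _ = w[i+1+m+tq]'(by omega) := key _ _
              _ = w[((i+1)+tq)+m]'(by omega) := getElem_congr' rfl (by omega)
              _ = (w.drop ((i+1)+tq))[m]'(by simp [length_drop]; omega) := (getElem_drop).symm
              _ = ((w.drop ((i+1)+tq)).take tq)[m]'hm2 := (getElem_take).symm
        exact not_squareFree_of_eq htq (by omega) hsq hw

end Morphism
end Lemma12

namespace Lemma12
open List

/-! ### The ternary square-free morphism -/

def g : Fin 3 → List (Fin 3)
  | 0 => [0,1,2,0,2,1,2,0,1,0,2]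
  | 1 => [0,1,2,1,0,2,0,1,0,2,1]
  | 2 => [0,1,2,1,0,2,1,2,0,2,1]

def M3 : List (Fin 3) := [0,1,2]

lemma g_len : ∀ c, (g c).length = 11 := by decide
lemma g_Mpre' : ∀ c, (g c).take 3 = M3 := by decide
lemma g_Mpre : ∀ c, M3 <+: g c := fun c => prefix_iff_eq_take.mpr (g_Mpre' c).symm
lemma g_Mocc_aux : ∀ a b : Fin 3, ∀ o : Fin 20,
    ((g a ++ g b).drop o.val).take 3 = M3 → o.val = 0 ∨ o.val = 11 := by decide
lemma g_Mocc : ∀ a b : Fin 3, ∀ o : ℕ, o + M3.length ≤ 2*11 →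
    ((g a ++ g b).drop o).take M3.length = M3 → o = 0 ∨ o = 11 := by
  intro a b o h1 h2
  have ho : o < 20 := by have h3 : M3.length = 3 := rfl; omega
  exact g_Mocc_aux a b ⟨o, ho⟩ h2
lemma g_inj : ∀ a b : Fin 3, g a = g b → a = b := by decide
lemma g_H2_aux : ∀ a b c : Fin 3, ∀ T : Fin 11, 0 < T.val →
    (g a).drop T.val = (g b).drop T.val → (g b).take T.val = (g c).take T.val →
    a = b ∨ b = c := by decide
lemma g_H2 : ∀ a b c : Fin 3, ∀ T : ℕ, 0 < T → T < 11 → (g a).drop T = (g b).drop T →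
    (g b).take T = (g c).take T → a = b ∨ b = c := by
  intro a b c T h1 h2 h3 h4
  exact g_H2_aux a b c ⟨T, h2⟩ h1 h3 h4

lemma encode4 {γ : Type*} [Inhabited γ] : ∀ x : List γ, x.length ≤ 4 →
    ∃ (a b c d : γ) (k : ℕ), k < 5 ∧ x = ([a,b,c,d] : List γ).take k := by
  intro x hx
  match x with
  | [] => exact ⟨default, default, default, default, 0, by omega, rfl⟩
  | [a] => exact ⟨a, default, default, default, 1, by omega, rfl⟩
  | [a,b] => exact ⟨a, b, default, default, 2, by omega, rfl⟩
  | [a,b,c] => exact ⟨a, b, c, default, 3, by omega, rfl⟩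
  | [a,b,c,d] => exact ⟨a, b, c, d, 4, by omega, rfl⟩
  | a::b::c::d::e::l => (exfalso; simp only [length_cons] at hx; omega)

lemma g_short_aux : ∀ a b c d : Fin 3, ∀ k : Fin 5,
    sfCheck (([a,b,c,d] : List (Fin 3)).take k.val) →
    noSqB ((([a,b,c,d] : List (Fin 3)).take k.val).flatMap g) = true := by decide

lemma g_short : ∀ x : List (Fin 3), SquareFree x → x.length ≤ 4 → SquareFree (x.flatMap g) := by
  intro x hsf hlen
  obtain ⟨a,b,c,d,k,hk,hx⟩ := encode4 x hlen
  subst hx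
  rw [squareFree_iff_sfCheck] at hsf
  exact noSqB_sound _ (g_short_aux a b c d ⟨k, hk⟩ hsf)

lemma g_sf {w : List (Fin 3)} (hw : SquareFree w) : SquareFree (w.flatMap g) :=
  squareFree_flatMap g 11 M3 4 (by omega) (by simp [M3]) (by simp [M3])
    g_len g_Mpre g_Mocc g_inj g_H2 (by simp [M3]) g_short w hw

/-! ### arbitrarily long ternary square-free words -/

def gpow : ℕ → List (Fin 3)
  | 0 => [0]
  | k+1 => (gpow k).flatMap g

lemma gpow_sf : ∀ k, SquareFree (gpow k)
  | 0 => by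
      rw [squareFree_iff_sfCheck]
      decide
  | k+1 => g_sf (gpow_sf k)

lemma gpow_len : ∀ k, (gpow k).length = 11^k
  | 0 => rfl
  | k+1 => by
      rw [show gpow (k+1) = (gpow k).flatMap g from rfl, flatMap_length g 11 g_len,
        gpow_len k, pow_succ]
      ring

lemma gpow_head : ∀ k, ∃ rest, gpow k = 0 :: rest
  | 0 => ⟨[], rfl⟩
  | k+1 => by
      obtain ⟨r, hr⟩ := gpow_head k
      exact ⟨_, by rw [show gpow (k+1) = (gpow k).flatMap g from rfl, hr, flatMap_cons]; rfl⟩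

def tern (l : ℕ) : List (Fin 3) := (gpow l).take l

lemma tern_len (l : ℕ) : (tern l).length = l := by
  have := Nat.lt_pow_self (n := l) (by norm_num : 1 < 11)
  simp [tern, length_take, gpow_len]
  omega

lemma tern_sf (l : ℕ) : SquareFree (tern l) :=
  squareFree_of_infix (gpow_sf l) (take_prefix _ _).isInfix

lemma tern_head (l : ℕ) (hl : 0 < l) (h0 : 0 < (tern l).length) : (tern l)[0] = 0 := by
  obtain ⟨r, hr⟩ := gpow_head l
  cases l with
  | zero => omega
  | succ m => simp [tern, hr]

/-! ### the D-level morphism -/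

def vP0 : V := (pid, false)
def vP1 : V := (pab, true)
def vP2 : V := (pacb, false)
def vP3 : V := (pbc, true)
def vP4 : V := (pabc, false)
def vP5 : V := (pac, true)
def vM0 : V := (pbc, false)
def vM1 : V := (pabc, true)
def vM2 : V := (pac, false)
def vM3 : V := (pid, true)
def vM4 : V := (pab, false)
def vM5 : V := (pacb, true)

def Eb : Fin 3 → List V
  | 0 => [vP0,vP1,vP2,vP3,vM3,vP3,vP4,vP5]
  | 1 => [vP0,vP1,vM1,vP1,vP2,vP3,vP4,vP5]
  | 2 => [vP0,vP1,vP2,vM2,vP2,vP3,vP4,vP5]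

def MV : List V := [vP0]

instance : DecidableRel Arc := fun x y => inferInstanceAs (Decidable ((x,y) ∈ arcs))

lemma Eb_len : ∀ c, (Eb c).length = 8 := by decide
lemma Eb_Mpre' : ∀ c, (Eb c).take 1 = MV := by decide
lemma Eb_Mpre : ∀ c, MV <+: Eb c := fun c => prefix_iff_eq_take.mpr (Eb_Mpre' c).symm
lemma Eb_Mocc_aux : ∀ a b : Fin 3, ∀ o : Fin 16,
    ((Eb a ++ Eb b).drop o.val).take 1 = MV → o.val = 0 ∨ o.val = 8 := by decide
lemma Eb_Mocc : ∀ a b : Fin 3, ∀ o : ℕ, o + MV.length ≤ 2*8 →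
    ((Eb a ++ Eb b).drop o).take MV.length = MV → o = 0 ∨ o = 8 := by
  intro a b o h1 h2
  have ho : o < 16 := by have h3 : MV.length = 1 := rfl; omega
  exact Eb_Mocc_aux a b ⟨o, ho⟩ h2
lemma Eb_inj : ∀ a b : Fin 3, Eb a = Eb b → a = b := by decide
lemma Eb_H2_aux : ∀ a b c : Fin 3, ∀ T : Fin 8, 0 < T.val →
    (Eb a).drop T.val = (Eb b).drop T.val → (Eb b).take T.val = (Eb c).take T.val →
    a = b ∨ b = c := by decide
lemma Eb_H2 : ∀ a b c : Fin 3, ∀ T : ℕ, 0 < T → T < 8 → (Eb a).drop T = (Eb b).drop T →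
    (Eb b).take T = (Eb c).take T → a = b ∨ b = c := by
  intro a b c T h1 h2 h3 h4
  exact Eb_H2_aux a b c ⟨T, h2⟩ h1 h3 h4

lemma encode3 {γ : Type*} [Inhabited γ] : ∀ x : List γ, x.length ≤ 3 →
    ∃ (a b c : γ) (k : ℕ), k < 4 ∧ x = ([a,b,c] : List γ).take k := by
  intro x hx
  match x with
  | [] => exact ⟨default, default, default, 0, by omega, rfl⟩
  | [a] => exact ⟨a, default, default, 1, by omega, rfl⟩
  | [a,b] => exact ⟨a, b, default, 2, by omega, rfl⟩
  | [a,b,c] => exact ⟨a, b, c, 3, by omega, rfl⟩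
  | a::b::c::d::l => (exfalso; simp only [length_cons] at hx; omega)

def enc : V → Fin 12 := fun v =>
  if v = vP0 then 0 else if v = vP1 then 1 else if v = vP2 then 2 else if v = vP3 then 3
  else if v = vP4 then 4 else if v = vP5 then 5 else if v = vM0 then 6 else if v = vM1 then 7
  else if v = vM2 then 8 else if v = vM3 then 9 else if v = vM4 then 10 else 11

def Ebc : Fin 3 → List (Fin 12)
  | 0 => [0,1,2,3,9,3,4,5]
  | 1 => [0,1,7,1,2,3,4,5]
  | 2 => [0,1,2,8,2,3,4,5]

lemma Eb_code : ∀ c, (Eb c).map enc = Ebc c := by decide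

lemma flatMap_code (x : List (Fin 3)) : (x.flatMap Eb).map enc = x.flatMap Ebc := by
  induction x with
  | nil => simp
  | cons a t ih => simp [flatMap_cons, map_append, Eb_code, ih]

lemma squareFree_of_map {γ δ : Type*} {f : γ → δ} {w : List γ} (h : SquareFree (w.map f)) :
    SquareFree w := by
  intro x hx hxx
  apply h (x.map f) (by simpa using hx)
  have h2 := hxx.map f
  simpa using h2

lemma Eb_short_aux : ∀ a b c : Fin 3, ∀ k : Fin 4,
    sfCheck (([a,b,c] : List (Fin 3)).take k.val) →
    noSqB ((([a,b,c] : List (Fin 3)).take k.val).flatMap Ebc) = true := by decide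

lemma Eb_short : ∀ x : List (Fin 3), SquareFree x → x.length ≤ 3 → SquareFree (x.flatMap Eb) := by
  intro x hsf hlen
  obtain ⟨a,b,c,k,hk,hx⟩ := encode3 x hlen
  subst hx
  rw [squareFree_iff_sfCheck] at hsf
  apply squareFree_of_map (f := enc)
  rw [flatMap_code]
  exact noSqB_sound _ (Eb_short_aux a b c ⟨k, hk⟩ hsf)

lemma Eb_sf {w : List (Fin 3)} (hw : SquareFree w) : SquareFree (w.flatMap Eb) :=
  squareFree_flatMap Eb 8 MV 3 (by omega) (by simp [MV]) (by simp [MV])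
    Eb_len Eb_Mpre Eb_Mocc Eb_inj Eb_H2 (by simp [MV]) Eb_short w hw

/-! ### walkability and letter facts for `Eb` -/

lemma Eb_chain : ∀ c, Chain' Arc (Eb c) := by
  intro c
  fin_cases c <;>
    · simp only [Eb, Chain', List.isChain_cons_cons, List.isChain_singleton, and_true]
      decide

lemma Eb_last : ∀ c, (Eb c).getLast? = some vP5 := by decide
lemma Eb_headq : ∀ c, (Eb c).head? = some vP0 := by decide

lemma Eb_jun : ∀ c c' : Fin 3, ∀ x ∈ (Eb c).getLast?, ∀ y ∈ (Eb c').head?, Arc x y := by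
  intro c c' x hx y hy
  rw [Eb_last] at hx
  rw [Eb_headq] at hy
  simp only [Option.mem_some_iff] at hx hy
  subst hx; subst hy
  decide

lemma Eb_chain_flatMap (w : List (Fin 3)) : Chain' Arc (w.flatMap Eb) :=
  flatMap_chain' Eb 8 (by omega) Eb_len Eb_chain Eb_jun w

def Sletters : List V := [vP0,vP1,vP2,vP3,vP4,vP5,vM1,vM2,vM3]

lemma Eb_mem : ∀ c : Fin 3, ∀ v ∈ Eb c, v ∈ Sletters := by decide

lemma Eb_mem_flatMap (w : List (Fin 3)) : ∀ v ∈ w.flatMap Eb, v ∈ Sletters := by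
  intro v hv
  obtain ⟨c, _, hc⟩ := mem_flatMap.mp hv
  exact Eb_mem c v hc

lemma getElem_of_getElem? {γ : Type*} {l : List γ} {i : ℕ} {v : γ}
    (h : l[i]? = some v) (hi : i < l.length) : l[i]'hi = v := by
  rw [getElem?_eq_getElem hi] at h
  injection h

lemma Eb_val0 : ∀ c, (Eb c)[0]? = some vP0 := by decide
lemma Eb_val6 : ∀ c, (Eb c)[6]? = some vP4 := by decide
lemma Eb_val7 : ∀ c, (Eb c)[7]? = some vP5 := by decide
lemma Eb_val4 : (Eb 0)[4]? = some vM3 := by decide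

end Lemma12

namespace Lemma12
open List

/-! ### circular assembly -/

lemma chain'_of_infix {γ : Type*} {R : γ → γ → Prop} {u w : List γ}
    (h : Chain' R w) (hu : u <:+: w) : Chain' R u := by
  obtain ⟨s, t, hst⟩ := hu
  have h2 : Chain' R ((s ++ u) ++ t) := by
    rw [show (s ++ u) ++ t = s ++ u ++ t by simp [append_assoc], hst]
    exact h
  exact (isChain_append.mp ((isChain_append.mp h2).1)).2.1

lemma infix_split {γ : Type*} {x m y v : List γ} (hm : m ≠ []) (hv : v <:+: x ++ m ++ y)
    (hd : ∀ a ∈ m, a ∉ v) : v <:+: x ∨ v <:+: y := by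
  rcases eq_or_ne v [] with rfl | hvne
  · exact Or.inl nil_infix
  obtain ⟨s, t, hst⟩ := hv
  have hst2 : (s ++ v) ++ t = (x ++ m) ++ y := by
    rw [show (s ++ v) ++ t = s ++ v ++ t by simp [append_assoc],
      show (x ++ m) ++ y = x ++ m ++ y by simp [append_assoc], hst]
  have hmlen : 0 < m.length := length_pos_iff.mpr hm
  have hvlen : 0 < v.length := length_pos_iff.mpr hvne
  have hlen := congrArg List.length hst2
  simp only [length_append] at hlen
  have h1 : ((x ++ m ++ y).drop s.length).take v.length = v := by
    rw [← hst, show s ++ v ++ t = s ++ (v ++ t) by simp [append_assoc], drop_left,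
      take_left' rfl]
  rcases le_or_gt (s.length + v.length) x.length with hc1 | hc1
  · left
    have h2 : ((x ++ m ++ y).drop s.length).take v.length = (x.drop s.length).take v.length := by
      rw [show x ++ m ++ y = x ++ (m ++ y) by simp [append_assoc],
        window_eq s.length v.length (by omega)]
    rw [← h1, h2]
    exact take_drop_infix _ _ _
  rcases le_or_gt (x.length + m.length) s.length with hc2 | hc2
  · right
    have h2 : (x ++ m ++ y).drop s.length = y.drop (s.length - x.length - m.length) := by
      rw [show x ++ m ++ y = (x ++ m) ++ y by simp [append_assoc]]
      conv_lhs => rw [show s.length = (x ++ m).length + (s.length - x.length - m.length) by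
        rw [length_append]; omega]
      rw [drop_length_add_append]
    rw [← h1, h2]
    exact take_drop_infix _ _ _
  · exfalso
    set gi := max s.length x.length with hgi
    have hg1 : x.length ≤ gi := le_max_right _ _
    have hg2 : s.length ≤ gi := le_max_left _ _
    have hg3 : gi < x.length + m.length := by omega
    have hg4 : gi < s.length + v.length := by omega
    have hglen : gi < (x ++ m ++ y).length := by simp [length_append]; omega
    have e1 : (x ++ m ++ y)[gi]'hglen ∈ m := by
      have hx2 : x ++ m ++ y = x ++ (m ++ y) := by simp [append_assoc]
      have e0 : (x ++ m ++ y)[gi]'hglen = (x ++ (m ++ y))[gi]'(by simp only [length_append]; omega) :=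
        getElem_congr' hx2 rfl
      rw [e0, getElem_append_right hg1, getElem_append_left (by omega : gi - x.length < m.length)]
      exact getElem_mem _
    have e2 : (x ++ m ++ y)[gi]'hglen ∈ v := by
      have hx3 : x ++ m ++ y = (s ++ v) ++ t := by
        rw [hst2]
      have e0 : (x ++ m ++ y)[gi]'hglen = ((s ++ v) ++ t)[gi]'(by simp only [length_append]; omega) :=
        getElem_congr' hx3 rfl
      have hgsv : gi < (s ++ v).length := by simp [length_append]; omega
      rw [e0, getElem_append_left hgsv, getElem_append_right hg2]
      exact getElem_mem _
    exact hd _ e1 e2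

lemma rotated_infix {γ : Type*} {u w : List γ} (h : u ~r w) : u <:+: w ++ w := by
  obtain ⟨n, hn⟩ := h.symm
  rcases eq_or_ne w [] with rfl | hw
  · rw [rotate_nil] at hn
    rw [← hn]
    exact nil_infix
  · set k := n % w.length with hk
    have hkle : k ≤ w.length := le_of_lt (Nat.mod_lt _ (length_pos_iff.mpr hw))
    rw [← rotate_mod, ← hk, rotate_eq_drop_append_take hkle] at hn
    refine ⟨w.take k, w.drop k, ?_⟩
    rw [← hn]
    have h10 : w.take k ++ w.drop k = w := take_append_drop k w
    calc w.take k ++ (w.drop k ++ w.take k) ++ w.drop k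
        = (w.take k ++ w.drop k) ++ (w.take k ++ w.drop k) := by
          simp only [append_assoc]
      _ = w ++ w := by rw [h10]

lemma countP_nodup_one {γ : Type*} [DecidableEq γ] {l : List γ} {a : γ}
    (hnd : l.Nodup) (ha : a ∈ l) :
    l.countP (fun v => decide (v = a)) = 1 := by
  induction l with
  | nil => simp at ha
  | cons b t ih =>
    rw [countP_cons]
    have hnd' := nodup_cons.mp hnd
    rcases mem_cons.mp ha with rfl | hat
    · have ht0 : t.countP (fun v => decide (v = a)) = 0 := by
        rw [countP_eq_zero]
        intro x hx
        simp only [decide_eq_true_eq]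
        rintro rfl
        exact hnd'.1 hx
      simp [ht0]
    · have hba : b ≠ a := by
        rintro rfl
        exact hnd'.1 hat
      rw [ih hnd'.2 hat]
      simp [hba]

lemma assemble (B Ag : List V) (hBne : B ≠ []) (hAne : Ag ≠ [])
    (hBsf : SquareFree B) (hAnd : Ag.Nodup) (hdisj : ∀ a ∈ Ag, a ∉ B)
    (hchain : Chain' Arc ((B ++ Ag) ++ (B ++ Ag))) :
    CircSquareFree (B ++ Ag) ∧ CircWalkable (B ++ Ag) := by
  constructor
  · intro u hu xx hxxne hinf
    have hperm : u ~ (B ++ Ag) := hu.perm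
    have hxW : xx ++ xx <:+: (B ++ Ag) ++ (B ++ Ag) := hinf.trans (rotated_infix hu)
    have hnotin : ∀ a ∈ Ag, a ∉ xx ++ xx := by
      intro a ha hmem
      set p : V → Bool := fun v => decide (v = a) with hp
      have h2 : B.countP p = 0 := by
        rw [countP_eq_zero]
        intro x hx
        simp only [hp, decide_eq_true_eq]
        rintro rfl
        exact (hdisj _ ha) hx
      have h3 : Ag.countP p = 1 := countP_nodup_one hAnd ha
      have h1 : (B ++ Ag).countP p = 1 := by
        rw [countP_append, h2, h3]
      have h4 : (xx ++ xx).countP p ≤ u.countP p := Sublist.countP_le (p := p) (hinf.sublist)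
      have h5 : u.countP p = (B ++ Ag).countP p := hperm.countP_eq p
      have h7 : a ∈ xx := by rcases mem_append.mp hmem with h | h <;> exact h
      have h8 : 0 < xx.countP p := by
        rw [countP_pos_iff]
        exact ⟨a, h7, by simp [hp]⟩
      have h6 : (xx ++ xx).countP p = xx.countP p + xx.countP p := countP_append
      omega
    have hx1 : xx ++ xx <:+: B ++ Ag ++ (B ++ Ag) := by
      rw [show B ++ Ag ++ (B ++ Ag) = (B ++ Ag) ++ (B ++ Ag) by simp [append_assoc]]
      exact hxW
    rcases infix_split hAne hx1 hnotin with h | h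
    · exact hBsf xx hxxne h
    · have hx2 : xx ++ xx <:+: B ++ Ag ++ ([] : List V) := by simpa using h
      rcases infix_split hAne hx2 hnotin with h' | h'
      · exact hBsf xx hxxne h'
      · have h9 := h'.sublist.length_le
        simp only [length_nil, length_append, Nat.le_zero] at h9
        have : xx = [] := by
          cases xx with
          | nil => rfl
          | cons a t => simp at h9
        exact hxxne this
  · intro u hu
    exact chain'_of_infix hchain (rotated_infix hu)

lemma circ_chain {B Ag : List V} {vb0 vb1 va0 va1 : V}
    (hB : Chain' Arc B) (hA : Chain' Arc Ag)
    (hb0 : B.head? = some vb0) (hb1 : B.getLast? = some vb1)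
    (ha0 : Ag.head? = some va0) (ha1 : Ag.getLast? = some va1)
    (arc1 : Arc vb1 va0) (arc2 : Arc va1 vb0) :
    Chain' Arc ((B ++ Ag) ++ (B ++ Ag)) := by
  have hBne : B ≠ [] := by intro h; rw [h] at hb0; simp at hb0
  have hBA : Chain' Arc (B ++ Ag) := by
    simp only [Chain']; rw [isChain_append]
    refine ⟨hB, hA, ?_⟩
    intro p hp q hq
    rw [hb1] at hp
    rw [ha0] at hq
    rw [Option.mem_some_iff] at hp hq
    rw [← hp, ← hq]
    exact arc1
  simp only [Chain']; rw [isChain_append]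
  refine ⟨hBA, hBA, ?_⟩
  intro p hp q hq
  rw [getLast?_append, ha1] at hp
  have hp' : va1 = p := by simpa using hp
  rw [head?_append_of_ne_nil _ hBne, hb0] at hq
  have hq' : vb0 = q := by simpa using hq
  rw [← hp', ← hq']
  exact arc2

lemma head?_of_getElem {γ : Type*} {l : List γ} {v : γ} (h0 : 0 < l.length)
    (h : l[0]'h0 = v) : l.head? = some v := by
  rw [head?_eq_getElem?, getElem?_eq_getElem h0, h]

lemma getLast?_of_getElem {γ : Type*} {l : List γ} {v : γ} (h0 : 0 < l.length)
    (h : l[l.length - 1]'(by omega) = v) : l.getLast? = some v := by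
  rw [getLast?_eq_getElem?, getElem?_eq_getElem (by omega : l.length - 1 < l.length), h]

/-! ### values inside `Ew` -/

lemma Ew_len (k : ℕ) : ((tern (k+1)).flatMap Eb).length = 8*(k+1) := by
  rw [flatMap_length Eb 8 Eb_len, tern_len]

lemma Ew_get? (k i u : ℕ) (hi : i < k+1) (hu : u < 8) {vv : V}
    (hval : ∀ c, (Eb c)[u]? = some vv) :
    ((tern (k+1)).flatMap Eb)[8*i+u]? = some vv := by
  have hEwlen := Ew_len k
  have h8 : 8*i + u < 8*(k+1) := by omega
  rw [getElem?_eq_getElem (by omega)]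
  congr 1
  rw [flatMap_getElem Eb 8 Eb_len _ i u (by rw [tern_len]; omega) hu (by omega)]
  exact getElem_of_getElem? (hval _) _

lemma Ew_get4? (k : ℕ) : ((tern (k+1)).flatMap Eb)[4]? = some vM3 := by
  have hEwlen := Ew_len k
  have hwlen : (tern (k+1)).length = k+1 := tern_len _
  rw [getElem?_eq_getElem (by omega)]
  congr 1
  have h0 : (tern (k+1))[0]'(by omega) = 0 := tern_head _ (by omega) _
  calc ((tern (k+1)).flatMap Eb)[4]'(by omega)
      = ((tern (k+1)).flatMap Eb)[8*0+4]'(by omega) := getElem_congr' rfl (by omega)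
    _ = (Eb ((tern (k+1))[0]'(by omega)))[4]'(by rw [Eb_len]; omega) :=
        flatMap_getElem Eb 8 Eb_len _ 0 4 (by omega) (by omega) (by omega)
    _ = (Eb 0)[4]'(by rw [Eb_len]; omega) := getElem_congr' (congrArg Eb h0) rfl
    _ = vM3 := getElem_of_getElem? Eb_val4 _

/-! ### the master builder -/

lemma build (k d len : ℕ) (Ag : List V) (vb0 vb1 va0 va1 : V)
    (hdlen : d + len ≤ 8*(k+1)) (hlen0 : 0 < len)
    (hb0 : ((tern (k+1)).flatMap Eb)[d]? = some vb0)
    (hb1 : ((tern (k+1)).flatMap Eb)[d+len-1]? = some vb1)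
    (hAchain : Chain' Arc Ag) (hAnodup : Ag.Nodup) (hAne : Ag ≠ [])
    (ha0 : Ag.head? = some va0) (ha1 : Ag.getLast? = some va1)
    (arc1 : Arc vb1 va0) (arc2 : Arc va1 vb0)
    (hAg : ∀ a ∈ Ag, a ∉ Sletters) :
    ∃ wv : List V, wv.length = len + Ag.length ∧ CircSquareFree wv ∧ CircWalkable wv := by
  set Ew := (tern (k+1)).flatMap Eb with hEwdef
  have hEwlen : Ew.length = 8*(k+1) := Ew_len k
  set B := (Ew.drop d).take len with hBdef
  have hBlen : B.length = len := by
    rw [hBdef, length_take, length_drop]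
    omega
  have hBne : B ≠ [] := by
    intro h; rw [h] at hBlen; simp at hBlen; omega
  have hBinf : B <:+: Ew := take_drop_infix _ _ _
  have hBsf : SquareFree B := squareFree_of_infix (Eb_sf (tern_sf _)) hBinf
  have hBchain : Chain' Arc B := chain'_of_infix (Eb_chain_flatMap _) hBinf
  have hB0 : B[0]'(by omega) = vb0 := by
    obtain ⟨hlt, hval⟩ := List.getElem?_eq_some_iff.mp hb0
    calc B[0]'(by omega) = (Ew.drop d)[0]'(by rw [length_drop]; omega) := getElem_take
      _ = Ew[d+0]'(by omega) := getElem_drop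
      _ = Ew[d]'hlt := getElem_congr' rfl (by omega)
      _ = vb0 := hval
  have hB1 : B[B.length - 1]'(by omega) = vb1 := by
    obtain ⟨hlt, hval⟩ := List.getElem?_eq_some_iff.mp hb1
    calc B[B.length-1]'(by omega)
        = (Ew.drop d)[B.length-1]'(by rw [length_drop]; omega) := getElem_take
      _ = Ew[d+(B.length-1)]'(by omega) := getElem_drop
      _ = Ew[d+len-1]'hlt := getElem_congr' rfl (by omega)
      _ = vb1 := hval
  have hdisj : ∀ a ∈ Ag, a ∉ B := by
    intro a ha hmem
    have h1 : a ∈ Ew := (hBinf.sublist).subset hmem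
    exact hAg a ha (Eb_mem_flatMap _ a h1)
  have hchain : Chain' Arc ((B ++ Ag) ++ (B ++ Ag)) :=
    circ_chain hBchain hAchain (head?_of_getElem (by omega) hB0)
      (getLast?_of_getElem (by omega) hB1) ha0 ha1 arc1 arc2
  obtain ⟨hcsf, hcw⟩ := assemble B Ag hBne hAne hBsf hAnodup hdisj hchain
  exact ⟨B ++ Ag, by rw [length_append, hBlen], hcsf, hcw⟩

/-! ### the four residue cases -/

lemma arcs_facts : Arc vP0 vM0 ∧ Arc vM0 vP0 ∧ Arc vP5 vM5 ∧ Arc vM5 vM4 ∧ Arc vM4 vP4 ∧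
    Arc vM0 vM5 ∧ Arc vM4 vM3 := by decide

lemma gadget_notin : ∀ a ∈ [vM0, vM5, vM4], a ∉ Sletters := by decide

theorem case2 (k : ℕ) :
    ∃ wv : List V, wv.length = 8*k+2 ∧ CircSquareFree wv ∧ CircWalkable wv := by
  obtain ⟨h1, h2, h3, h4, h5, h6, h7⟩ := arcs_facts
  have hb0 : ((tern (k+1)).flatMap Eb)[0]? = some vP0 := by
    have := Ew_get? k 0 0 (by omega) (by omega) Eb_val0
    simpa using this
  have hb1 : ((tern (k+1)).flatMap Eb)[0+(8*k+1)-1]? = some vP0 := by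
    have := Ew_get? k k 0 (by omega) (by omega) Eb_val0
    convert this using 2
    omega
  obtain ⟨wv, hl, hc1, hc2⟩ := build k 0 (8*k+1) [vM0] vP0 vP0 vM0 vM0 (by omega) (by omega)
    hb0 hb1 (by simp [Chain']) (by decide) (by simp) rfl rfl h1 h2
    (by intro a ha hs; exact gadget_notin a (by simp at ha; simp [ha]) hs)
  refine ⟨wv, ?_, hc1, hc2⟩
  simp only [length_cons, length_nil] at hl
  omega

theorem case4 (k : ℕ) :
    ∃ wv : List V, wv.length = 8*k+4 ∧ CircSquareFree wv ∧ CircWalkable wv := by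
  obtain ⟨h1, h2, h3, h4, h5, h6, h7⟩ := arcs_facts
  have hb0 : ((tern (k+1)).flatMap Eb)[6]? = some vP4 := by
    have := Ew_get? k 0 6 (by omega) (by omega) Eb_val6
    simpa using this
  have hb1 : ((tern (k+1)).flatMap Eb)[6+(8*k+2)-1]? = some vP5 := by
    have := Ew_get? k k 7 (by omega) (by omega) Eb_val7
    convert this using 2
    omega
  obtain ⟨wv, hl, hc1, hc2⟩ := build k 6 (8*k+2) [vM5, vM4] vP4 vP5 vM5 vM4 (by omega) (by omega)
    hb0 hb1 (isChain_pair.mpr h4) (by decide) (by simp) rfl rfl h3 h5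
    (by intro a ha hs; exact gadget_notin a (by simp at ha; rcases ha with h | h <;> simp [h]) hs)
  refine ⟨wv, ?_, hc1, hc2⟩
  simp only [length_cons, length_nil] at hl
  omega

theorem case6 (k : ℕ) :
    ∃ wv : List V, wv.length = 8*k+6 ∧ CircSquareFree wv ∧ CircWalkable wv := by
  obtain ⟨h1, h2, h3, h4, h5, h6, h7⟩ := arcs_facts
  set K := k + 1 with hK
  have hb0 : ((tern (K+1)).flatMap Eb)[6]? = some vP4 := by
    have := Ew_get? K 0 6 (by omega) (by omega) Eb_val6
    simpa using this
  have hb1 : ((tern (K+1)).flatMap Eb)[6+(8*k+3)-1]? = some vP0 := by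
    have := Ew_get? K K 0 (by omega) (by omega) Eb_val0
    convert this using 2
    omega
  have hch : Chain' Arc [vM0, vM5, vM4] := by
    simp only [Chain']; rw [isChain_cons_cons, isChain_pair]  -- Chain' (a :: l): chain'_cons : Chain' (a::b::l) ↔ R a b ∧ Chain' (b::l) ?
    exact ⟨h6, h4⟩
  obtain ⟨wv, hl, hc1, hc2⟩ := build K 6 (8*k+3) [vM0, vM5, vM4] vP4 vP0 vM0 vM4 (by omega)
    (by omega) hb0 hb1 hch (by decide) (by simp) rfl rfl h1 h5 gadget_notin
  refine ⟨wv, ?_, hc1, hc2⟩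
  simp only [length_cons, length_nil] at hl
  omega

theorem case0 (k : ℕ) :
    ∃ wv : List V, wv.length = 8*k+8 ∧ CircSquareFree wv ∧ CircWalkable wv := by
  obtain ⟨h1, h2, h3, h4, h5, h6, h7⟩ := arcs_facts
  set K := k + 1 with hK
  have hb0 : ((tern (K+1)).flatMap Eb)[4]? = some vM3 := Ew_get4? K
  have hb1 : ((tern (K+1)).flatMap Eb)[4+(8*k+5)-1]? = some vP0 := by
    have := Ew_get? K K 0 (by omega) (by omega) Eb_val0
    convert this using 2
    omega
  have hch : Chain' Arc [vM0, vM5, vM4] := by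
    simp only [Chain']; rw [isChain_cons_cons, isChain_pair]
    exact ⟨h6, h4⟩
  obtain ⟨wv, hl, hc1, hc2⟩ := build K 4 (8*k+5) [vM0, vM5, vM4] vM3 vP0 vM0 vM4 (by omega)
    (by omega) hb0 hb1 hch (by decide) (by simp) rfl rfl h1 h7 gadget_notin
  refine ⟨wv, ?_, hc1, hc2⟩
  simp only [length_cons, length_nil] at hl
  omega

end Lemma12

/-- Lemma 12: for every even positive integer `n`, there is a square-free circular word of
length `n` over `V(D)` that is walkable in `D`. -/
theorem even_length_walkable (n : ℕ) (hpos : 0 < n) (heven : Even n) :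
    ∃ w : List V, w.length = n ∧ CircSquareFree w ∧ CircWalkable w := by
  have h2 : n % 2 = 0 := by
    obtain ⟨m, hm⟩ := heven
    omega
  have h8 : n % 8 = 0 ∨ n % 8 = 2 ∨ n % 8 = 4 ∨ n % 8 = 6 := by omega
  rcases h8 with h | h | h | h
  · obtain ⟨k, hk⟩ : ∃ k, n = 8*k+8 := ⟨n/8 - 1, by omega⟩
    rw [hk]; exact Lemma12.case0 k
  · obtain ⟨k, hk⟩ : ∃ k, n = 8*k+2 := ⟨n/8, by omega⟩
    rw [hk]; exact Lemma12.case2 k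
  · obtain ⟨k, hk⟩ : ∃ k, n = 8*k+4 := ⟨n/8, by omega⟩
    rw [hk]; exact Lemma12.case4 k
  · obtain ⟨k, hk⟩ : ∃ k, n = 8*k+6 := ⟨n/8, by omega⟩
    rw [hk]; exact Lemma12.case6 k
end

section
/- For every integer n ≥ 4, over the alphabet Σ_n = {1, 2, …, n}, the word w_n = 121 u_3 121 u_4 ⋯ 121 u_n 121, where u_k = k 2 k for each 3 ≤ k ≤ n, is irreducibly square-free. -/
/-- `w` is irreducibly square-free: `w` is square-free and the removal of any interior
letter of `w` produces a word containing a square. -/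
def IrreduciblySquareFree {α : Type*} (w : List α) : Prop :=
  SquareFree w ∧
    ∀ (x y : List α) (a : α), w = x ++ [a] ++ y → x ≠ [] → y ≠ [] → ¬ SquareFree (x ++ y)

/-- The word `w_n = 121 u_3 121 u_4 ⋯ 121 u_n 121`, where `u_k = k2k` for `3 ≤ k ≤ n`. -/
def wn (n : ℕ) : List ℕ :=
  [1, 2, 1] ++ (((List.range (n - 2)).map fun i => [i + 3, 2, i + 3, 1, 2, 1]).flatten)

/-! ### Auxiliary machinery -/

/-- The letter of `wn` at position `j`. -/
def ff (j : ℕ) : ℕ :=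
  if j % 6 = 3 ∨ j % 6 = 5 then j / 6 + 3
  else if j % 6 = 1 ∨ j % 6 = 4 then 2 else 1

lemma ff_0 {j : ℕ} (h : j % 6 = 0) : ff j = 1 := by simp [ff, h]
lemma ff_1 {j : ℕ} (h : j % 6 = 1) : ff j = 2 := by simp [ff, h]
lemma ff_2 {j : ℕ} (h : j % 6 = 2) : ff j = 1 := by simp [ff, h]
lemma ff_3 {j : ℕ} (h : j % 6 = 3) : ff j = j / 6 + 3 := by simp [ff, h]
lemma ff_4 {j : ℕ} (h : j % 6 = 4) : ff j = 2 := by simp [ff, h]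
lemma ff_5 {j : ℕ} (h : j % 6 = 5) : ff j = j / 6 + 3 := by simp [ff, h]

lemma ff_big {j c : ℕ} (h : ff j = c) (hc : 3 ≤ c) :
    (j % 6 = 3 ∨ j % 6 = 5) ∧ c = j / 6 + 3 := by
  rcases (show j%6=0 ∨ j%6=1 ∨ j%6=2 ∨ j%6=3 ∨ j%6=4 ∨ j%6=5 from by omega) with
    hr|hr|hr|hr|hr|hr
  · rw [ff_0 hr] at h; omega
  · rw [ff_1 hr] at h; omega
  · rw [ff_2 hr] at h; omega
  · rw [ff_3 hr] at h; exact ⟨Or.inl hr, h.symm⟩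
  · rw [ff_4 hr] at h; omega
  · rw [ff_5 hr] at h; exact ⟨Or.inr hr, h.symm⟩

lemma ff_one {j : ℕ} (h : ff j = ff (j + 1)) : False := by
  rcases (show j%6=0 ∨ j%6=1 ∨ j%6=2 ∨ j%6=3 ∨ j%6=4 ∨ j%6=5 from by omega) with
    hr|hr|hr|hr|hr|hr
  · rw [ff_0 hr, ff_1 (by omega)] at h; omega
  · rw [ff_1 hr, ff_2 (by omega)] at h; omega
  · rw [ff_2 hr, ff_3 (by omega)] at h; omega
  · rw [ff_3 hr, ff_4 (by omega)] at h; omega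
  · rw [ff_4 hr, ff_5 (by omega)] at h; omega
  · rw [ff_5 hr, ff_0 (by omega)] at h; omega

lemma ff_two {j : ℕ} (h : ff j = ff (j + 2)) : j % 6 = 0 ∨ j % 6 = 3 := by
  rcases (show j%6=0 ∨ j%6=1 ∨ j%6=2 ∨ j%6=3 ∨ j%6=4 ∨ j%6=5 from by omega) with
    hr|hr|hr|hr|hr|hr
  · exact Or.inl hr
  · rw [ff_1 hr, ff_3 (by omega)] at h; omega
  · rw [ff_2 hr, ff_4 (by omega)] at h; omega
  · exact Or.inr hr
  · rw [ff_4 hr, ff_0 (by omega)] at h; omega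
  · rw [ff_5 hr, ff_1 (by omega)] at h; omega

lemma no_square_aux {s L t : ℕ} (hL : 3 ≤ L) (ht : t < L)
    (hr : (s + t) % 6 = 3 ∨ (s + t) % 6 = 5)
    (h : ∀ i < L, ff (s + i) = ff (s + L + i)) : False := by
  have hv := h t ht
  have h3 : ff (s + t) = (s + t) / 6 + 3 := by
    rcases hr with hr|hr
    exacts [ff_3 hr, ff_5 hr]
  have hb := ff_big (hv.symm.trans h3) (by omega)
  omega

lemma no_square {s L : ℕ} (hL : 0 < L)
    (h : ∀ i < L, ff (s + i) = ff (s + L + i)) : False := by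
  rcases (show L = 1 ∨ L = 2 ∨ 3 ≤ L from by omega) with h1 | h2 | h3
  · subst h1
    have h0 : ff s = ff (s + 1) := by simpa using h 0 (by omega)
    exact ff_one h0
  · subst h2
    have h0 : ff s = ff (s + 2) := by simpa using h 0 (by omega)
    have h1 : ff (s + 1) = ff (s + 1 + 2) := by
      rw [show s + 1 + 2 = s + 2 + 1 from by omega]; exact h 1 (by omega)
    have := ff_two h0
    have := ff_two h1
    omega
  · have key : (s % 6 = 0 ∧ L = 3) ∨
        (∃ t, t < L ∧ ((s + t) % 6 = 3 ∨ (s + t) % 6 = 5)) := by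
      rcases (show s%6=0 ∨ s%6=1 ∨ s%6=2 ∨ s%6=3 ∨ s%6=4 ∨ s%6=5 from by omega) with
        hr|hr|hr|hr|hr|hr
      · rcases (show L = 3 ∨ 4 ≤ L from by omega) with h3' | h4
        · exact Or.inl ⟨hr, h3'⟩
        · exact Or.inr ⟨3, by omega, by omega⟩
      · exact Or.inr ⟨2, by omega, by omega⟩
      · exact Or.inr ⟨1, by omega, by omega⟩
      · exact Or.inr ⟨0, by omega, by omega⟩
      · exact Or.inr ⟨1, by omega, by omega⟩
      · exact Or.inr ⟨0, by omega, by omega⟩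
    rcases key with ⟨hr, hL3⟩ | ⟨t, ht, hr⟩
    · subst hL3
      have h0 := h 0 (by omega)
      rw [ff_0 (by omega), show s + 3 + 0 = s + 3 from by omega,
        ff_3 (by omega)] at h0
      omega
    · exact no_square_aux h3 ht hr h

/-- `wn (m+2)` is given by the position function `ff`. -/
lemma wn_eq (m : ℕ) : wn (m + 2) = (List.range (6 * m + 3)).map ff := by
  induction m with
  | zero => rfl
  | succ m ih =>
    have h1 : wn (m + 1 + 2) = wn (m + 2) ++ [m + 3, 2, m + 3, 1, 2, 1] := by
      simp [wn, List.range_succ]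
    have h2 : (List.range (6 * m + 3 + 6)).map ff
        = (List.range (6 * m + 3)).map ff ++ [m + 3, 2, m + 3, 1, 2, 1] := by
      rw [List.range_add, List.map_append, List.map_map]
      congr 1
      rw [show List.range 6 = [0, 1, 2, 3, 4, 5] from by decide]
      simp only [List.map_cons, List.map_nil, Function.comp_apply]
      have e0 : ff (6*m+3+0) = m+3 := by rw [ff_3 (by omega)]; omega
      have e1 : ff (6*m+3+1) = 2 := ff_4 (by omega)
      have e2 : ff (6*m+3+2) = m+3 := by rw [ff_5 (by omega)]; omega
      have e3 : ff (6*m+3+3) = 1 := ff_0 (by omega)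
      have e4 : ff (6*m+3+4) = 2 := ff_1 (by omega)
      have e5 : ff (6*m+3+5) = 1 := ff_2 (by omega)
      rw [e0, e1, e2, e3, e4, e5]
    rw [h1, ih, show 6 * (m + 1) + 3 = 6 * m + 3 + 6 from by ring, h2]

/-- If a word repeats a block of length `ℓ > 0` at positions `q` and `q + ℓ`, it is
not square-free. -/
lemma not_squareFree_of {α : Type*} (w : List α) (q ℓ : ℕ) (hℓ : 0 < ℓ)
    (hlen : q + 2 * ℓ ≤ w.length)
    (h : ∀ i < ℓ, w[q + i]? = w[q + ℓ + i]?) : ¬ SquareFree w := by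
  intro hsf
  have hslen : ((w.drop q).take ℓ).length = ℓ := by
    simp; omega
  apply hsf ((w.drop q).take ℓ)
    (by intro h0; rw [h0] at hslen; simp at hslen; omega)
  have heq : (w.drop q).take ℓ ++ (w.drop q).take ℓ = (w.drop q).take (2 * ℓ) := by
    apply List.ext_getElem?
    intro i
    rcases (show i < ℓ ∨ (ℓ ≤ i ∧ i < 2*ℓ) ∨ 2*ℓ ≤ i from by omega) with
      hi | ⟨hi1, hi2⟩ | hi
    · rw [List.getElem?_append_left (by rw [hslen]; exact hi)]
      simp only [List.getElem?_take, List.getElem?_drop]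
      rw [if_pos hi, if_pos (show i < 2 * ℓ from by omega)]
    · rw [List.getElem?_append_right (by rw [hslen]; exact hi1), hslen]
      simp only [List.getElem?_take, List.getElem?_drop]
      rw [if_pos (by omega), if_pos hi2]
      have := h (i - ℓ) (by omega)
      rw [this, show q + ℓ + (i - ℓ) = q + i from by omega]
    · rw [List.getElem?_eq_none (by simp; omega), List.getElem?_eq_none (by simp; omega)]
  rw [heq]
  exact ((List.take_prefix _ _).isInfix).trans ((List.drop_suffix _ _).isInfix)

/-- For every `n ≥ 4`, the word `w_n` is irreducibly square-free. -/
theorem wn_irreducibly_squarefree (n : ℕ) (hn : 4 ≤ n) :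
    IrreduciblySquareFree (wn n) := by
  obtain ⟨m, rfl⟩ : ∃ m, n = m + 2 := ⟨n - 2, by omega⟩
  have hw : wn (m + 2) = (List.range (6 * m + 3)).map ff := wn_eq m
  have hwlen : (wn (m + 2)).length = 6 * m + 3 := by rw [hw]; simp
  have hwval : ∀ j, j < 6 * m + 3 → (wn (m + 2))[j]? = some (ff j) := by
    intro j hj
    rw [hw, List.getElem?_map, List.getElem?_range hj, Option.map_some]
  constructor
  · -- square-freeness
    intro x hx hinf
    obtain ⟨u, t, hut⟩ := hinf
    have hL : 0 < x.length := List.length_pos_iff.mpr hx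
    have hlen := congrArg List.length hut
    rw [hwlen] at hlen
    simp at hlen
    apply no_square (s := u.length) hL
    intro i hi
    have k1 : (wn (m + 2))[u.length + i]? = x[i]? := by
      rw [← hut, List.getElem?_append_left (by simp; omega),
        List.getElem?_append_right (by omega),
        List.getElem?_append_left (by omega)]
      congr 1
      omega
    have k2 : (wn (m + 2))[u.length + x.length + i]? = x[i]? := by
      rw [← hut, List.getElem?_append_left (by simp; omega),
        List.getElem?_append_right (by omega),
        List.getElem?_append_right (by omega)]
      congr 1
      omega
    have e1 := hwval (u.length + i) (by omega)
    have e2 := hwval (u.length + x.length + i) (by omega)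
    have : some (ff (u.length + i)) = some (ff (u.length + x.length + i)) := by
      rw [← e1, ← e2, k1, k2]
    exact Option.some.inj this
  · -- irreducibility
    intro x y a heq hx hy
    have hp1 : 1 ≤ x.length := List.length_pos_iff.mpr hx
    have hy1 : 1 ≤ y.length := List.length_pos_iff.mpr hy
    have hlen := congrArg List.length heq
    rw [hwlen] at hlen
    simp at hlen
    have gx : ∀ j, j < x.length → (x ++ y)[j]? = some (ff j) := by
      intro j hj
      rw [List.getElem?_append_left hj]
      have : x[j]? = (wn (m + 2))[j]? := by
        rw [heq, List.getElem?_append_left (by simp; omega),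
          List.getElem?_append_left hj]
      rw [this, hwval j (by omega)]
    have gy : ∀ j, x.length ≤ j → j + 1 < 6 * m + 3 →
        (x ++ y)[j]? = some (ff (j + 1)) := by
      intro j hj hjN
      rw [List.getElem?_append_right hj]
      have : y[j - x.length]? = (wn (m + 2))[j + 1]? := by
        rw [heq, List.getElem?_append_right (by simp; omega)]
        congr 1
        simp
      rw [this, hwval (j + 1) hjN]
    rcases (show x.length % 6 = 0 ∨ x.length % 6 = 1 ∨ x.length % 6 = 2 ∨
        x.length % 6 = 3 ∨ x.length % 6 = 4 ∨ x.length % 6 = 5 from by omega) with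
      hr|hr|hr|hr|hr|hr
    · -- removed a first `1` of a `121` block
      refine not_squareFree_of (x ++ y) (x.length - 3) 2 (by norm_num) (by simp; omega) ?_
      intro i hi
      interval_cases i
      · rw [gx (x.length - 3 + 0) (by omega), gx (x.length - 3 + 2 + 0) (by omega)]
        congr 1
        rw [ff_3 (by omega), ff_5 (by omega)]
        omega
      · rw [gx (x.length - 3 + 1) (by omega), gy (x.length - 3 + 2 + 1) (by omega) (by omega)]
        congr 1
        rw [ff_4 (by omega), ff_1 (by omega)]
    · -- removed the `2` of a `121` block
      refine not_squareFree_of (x ++ y) (x.length - 1) 1 (by norm_num) (by simp; omega) ?_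
      intro i hi
      interval_cases i
      rw [gx (x.length - 1 + 0) (by omega), gy (x.length - 1 + 1 + 0) (by omega) (by omega)]
      congr 1
      rw [ff_0 (by omega), ff_2 (by omega)]
    · -- removed a last `1` of a `121` block
      refine not_squareFree_of (x ++ y) (x.length - 1) 2 (by norm_num) (by simp; omega) ?_
      intro i hi
      interval_cases i
      · rw [gx (x.length - 1 + 0) (by omega), gy (x.length - 1 + 2 + 0) (by omega) (by omega)]
        congr 1
        rw [ff_1 (by omega), ff_4 (by omega)]
      · rw [gy (x.length - 1 + 1) (by omega) (by omega),
          gy (x.length - 1 + 2 + 1) (by omega) (by omega)]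
        congr 1
        rw [ff_3 (by omega), ff_5 (by omega)]
        omega
    · -- removed a first `k` of a `k2k` block
      refine not_squareFree_of (x ++ y) (x.length - 3) 2 (by norm_num) (by simp; omega) ?_
      intro i hi
      interval_cases i
      · rw [gx (x.length - 3 + 0) (by omega), gx (x.length - 3 + 2 + 0) (by omega)]
        congr 1
        rw [ff_0 (by omega), ff_2 (by omega)]
      · rw [gx (x.length - 3 + 1) (by omega), gy (x.length - 3 + 2 + 1) (by omega) (by omega)]
        congr 1
        rw [ff_1 (by omega), ff_4 (by omega)]
    · -- removed the `2` of a `k2k` block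
      refine not_squareFree_of (x ++ y) (x.length - 1) 1 (by norm_num) (by simp; omega) ?_
      intro i hi
      interval_cases i
      rw [gx (x.length - 1 + 0) (by omega), gy (x.length - 1 + 1 + 0) (by omega) (by omega)]
      congr 1
      rw [ff_3 (by omega), ff_5 (by omega)]
      omega
    · -- removed a second `k` of a `k2k` block
      refine not_squareFree_of (x ++ y) (x.length - 1) 2 (by norm_num) (by simp; omega) ?_
      intro i hi
      interval_cases i
      · rw [gx (x.length - 1 + 0) (by omega), gy (x.length - 1 + 2 + 0) (by omega) (by omega)]
        congr 1
        rw [ff_4 (by omega), ff_1 (by omega)]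
      · rw [gy (x.length - 1 + 1) (by omega) (by omega),
          gy (x.length - 1 + 2 + 1) (by omega) (by omega)]
        congr 1
        rw [ff_0 (by omega), ff_2 (by omega)]
end

section
/- For every integer n ≥ 470, there exist nonnegative integers a, b, c, d such that 41a + 52b + 61c + 64d = n and the sum a + b + c + d is even. -/
/-- For every `n ≥ 470`, there are nonnegative integers `a, b, c, d` with
`41a + 52b + 61c + 64d = n` and `a + b + c + d` even. -/
theorem postage_41_52_61_64 (n : ℕ) (hn : 470 ≤ n) :
    ∃ a b c d : ℕ, 41 * a + 52 * b + 61 * c + 64 * d = n ∧ Even (a + b + c + d) := by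
  induction n using Nat.strong_induction_on with
  | _ n ih =>
    by_cases h : 552 ≤ n
    · obtain ⟨a, b, c, d, h1, h2⟩ := ih (n - 82) (by omega) (by omega)
      exact ⟨a + 2, b, c, d, by omega, by
        have : a + 2 + b + c + d = (a + b + c + d) + 2 := by ring
        rw [this]; exact h2.add (even_two)⟩
    · interval_cases n
      · exact ⟨0, 2, 6, 0, by norm_num, by decide⟩
      · exact ⟨1, 0, 6, 1, by norm_num, by decide⟩
      · exact ⟨6, 2, 2, 0, by norm_num, by decide⟩
      · exact ⟨0, 2, 5, 1, by norm_num, by decide⟩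
      · exact ⟨1, 0, 5, 2, by norm_num, by decide⟩
      · exact ⟨6, 2, 1, 1, by norm_num, by decide⟩
      · exact ⟨0, 2, 4, 2, by norm_num, by decide⟩
      · exact ⟨1, 0, 4, 3, by norm_num, by decide⟩
      · exact ⟨6, 2, 0, 2, by norm_num, by decide⟩
      · exact ⟨0, 1, 7, 0, by norm_num, by decide⟩
      · exact ⟨1, 0, 3, 4, by norm_num, by decide⟩
      · exact ⟨6, 1, 3, 0, by norm_num, by decide⟩
      · exact ⟨0, 1, 6, 1, by norm_num, by decide⟩
      · exact ⟨1, 0, 2, 5, by norm_num, by decide⟩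
      · exact ⟨6, 1, 2, 1, by norm_num, by decide⟩
      · exact ⟨0, 1, 5, 2, by norm_num, by decide⟩
      · exact ⟨1, 0, 1, 6, by norm_num, by decide⟩
      · exact ⟨3, 7, 0, 0, by norm_num, by decide⟩
      · exact ⟨0, 0, 8, 0, by norm_num, by decide⟩
      · exact ⟨1, 0, 0, 7, by norm_num, by decide⟩
      · exact ⟨6, 0, 4, 0, by norm_num, by decide⟩
      · exact ⟨0, 0, 7, 1, by norm_num, by decide⟩
      · exact ⟨5, 2, 3, 0, by norm_num, by decide⟩
      · exact ⟨6, 0, 3, 1, by norm_num, by decide⟩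
      · exact ⟨0, 0, 6, 2, by norm_num, by decide⟩
      · exact ⟨5, 2, 2, 1, by norm_num, by decide⟩
      · exact ⟨3, 6, 1, 0, by norm_num, by decide⟩
      · exact ⟨0, 0, 5, 3, by norm_num, by decide⟩
      · exact ⟨2, 8, 0, 0, by norm_num, by decide⟩
      · exact ⟨3, 6, 0, 1, by norm_num, by decide⟩
      · exact ⟨0, 0, 4, 4, by norm_num, by decide⟩
      · exact ⟨5, 1, 4, 0, by norm_num, by decide⟩
      · exact ⟨6, 0, 0, 4, by norm_num, by decide⟩
      · exact ⟨0, 0, 3, 5, by norm_num, by decide⟩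
      · exact ⟨5, 1, 3, 1, by norm_num, by decide⟩
      · exact ⟨3, 5, 2, 0, by norm_num, by decide⟩
      · exact ⟨0, 0, 2, 6, by norm_num, by decide⟩
      · exact ⟨2, 7, 1, 0, by norm_num, by decide⟩
      · exact ⟨3, 5, 1, 1, by norm_num, by decide⟩
      · exact ⟨0, 0, 1, 7, by norm_num, by decide⟩
      · exact ⟨2, 7, 0, 1, by norm_num, by decide⟩
      · exact ⟨3, 5, 0, 2, by norm_num, by decide⟩
      · exact ⟨0, 0, 0, 8, by norm_num, by decide⟩
      · exact ⟨5, 0, 4, 1, by norm_num, by decide⟩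
      · exact ⟨3, 4, 3, 0, by norm_num, by decide⟩
      · exact ⟨4, 2, 3, 1, by norm_num, by decide⟩
      · exact ⟨2, 6, 2, 0, by norm_num, by decide⟩
      · exact ⟨3, 4, 2, 1, by norm_num, by decide⟩
      · exact ⟨1, 8, 1, 0, by norm_num, by decide⟩
      · exact ⟨2, 6, 1, 1, by norm_num, by decide⟩
      · exact ⟨0, 10, 0, 0, by norm_num, by decide⟩
      · exact ⟨1, 8, 0, 1, by norm_num, by decide⟩
      · exact ⟨2, 6, 0, 2, by norm_num, by decide⟩
      · exact ⟨3, 3, 4, 0, by norm_num, by decide⟩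
      · exact ⟨4, 1, 4, 1, by norm_num, by decide⟩
      · exact ⟨2, 5, 3, 0, by norm_num, by decide⟩
      · exact ⟨3, 3, 3, 1, by norm_num, by decide⟩
      · exact ⟨1, 7, 2, 0, by norm_num, by decide⟩
      · exact ⟨2, 5, 2, 1, by norm_num, by decide⟩
      · exact ⟨0, 9, 1, 0, by norm_num, by decide⟩
      · exact ⟨1, 7, 1, 1, by norm_num, by decide⟩
      · exact ⟨2, 5, 1, 2, by norm_num, by decide⟩
      · exact ⟨0, 9, 0, 1, by norm_num, by decide⟩
      · exact ⟨1, 7, 0, 2, by norm_num, by decide⟩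
      · exact ⟨2, 4, 4, 0, by norm_num, by decide⟩
      · exact ⟨3, 2, 4, 1, by norm_num, by decide⟩
      · exact ⟨1, 6, 3, 0, by norm_num, by decide⟩
      · exact ⟨2, 4, 3, 1, by norm_num, by decide⟩
      · exact ⟨0, 8, 2, 0, by norm_num, by decide⟩
      · exact ⟨1, 6, 2, 1, by norm_num, by decide⟩
      · exact ⟨2, 4, 2, 2, by norm_num, by decide⟩
      · exact ⟨0, 8, 1, 1, by norm_num, by decide⟩
      · exact ⟨1, 6, 1, 2, by norm_num, by decide⟩
      · exact ⟨2, 3, 5, 0, by norm_num, by decide⟩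
      · exact ⟨0, 8, 0, 2, by norm_num, by decide⟩
      · exact ⟨1, 5, 4, 0, by norm_num, by decide⟩
      · exact ⟨2, 3, 4, 1, by norm_num, by decide⟩
      · exact ⟨0, 7, 3, 0, by norm_num, by decide⟩
      · exact ⟨1, 5, 3, 1, by norm_num, by decide⟩
      · exact ⟨2, 3, 3, 2, by norm_num, by decide⟩
      · exact ⟨0, 7, 2, 1, by norm_num, by decide⟩
      · exact ⟨1, 5, 2, 2, by norm_num, by decide⟩
end
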